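/- arXiv:2604.12589 — 4 statements merged into one kernel-verified Lean document; each statement's English description precedes it below -/
import Mathlib

section
/- Let G be a connected compact metric graph with exponents p̄ = (p_e), 1 < p_e < ∞. There exists a constant λ_G > 0 such that for every u ∈ W^{1,p̄}(G) with Σ_{e∈E} ∫₀^{ℓ_e} u_e = 0 one has λ_G · Σ_{e∈E} ( ∫₀^{ℓ_e} |u_e|^{p_e} )^{1/p_e} ≤ Σ_{e∈E} ( ∫₀^{ℓ_e} |u_e'|^{p_e} )^{1/p_e} (Poincaré inequality on a compact metric graph). -/
open MeasureTheory Set Filter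

noncomputable section

/-- A connected compact metric graph: finite nonempty vertex set, finite edge set,
initial/terminal vertex maps without loops, positive edge lengths, no multiple edges,
and connectedness via paths of edges. -/
structure MetricGraph where
  V : Type
  E : Type
  fintypeV : Fintype V
  fintypeE : Fintype E
  nonemptyV : Nonempty V
  ι : E → V
  τ : E → V
  no_loops : ∀ e, ι e ≠ τ e
  len : E → ℝ
  len_pos : ∀ e, 0 < len e
  no_multi : ∀ e e', ({ι e, τ e} : Set V) = ({ι e', τ e'} : Set V) → e = e'
  connected : ∀ v w : V,
    Relation.ReflTransGen (fun a b => ∃ e, (ι e = a ∧ τ e = b) ∨ (ι e = b ∧ τ e = a)) v w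

/-- Sum over the edges of the graph. -/
def edgeSum (G : MetricGraph) (F : G.E → ℝ) : ℝ :=
  letI := G.fintypeE
  ∑ e, F e

/-- Sum over the vertices of the graph. -/
def vertexSum (G : MetricGraph) (F : G.V → ℝ) : ℝ :=
  letI := G.fintypeV
  ∑ v, F v

/-- Number of vertices. -/
def vertexCard (G : MetricGraph) : ℕ :=
  letI := G.fintypeV
  Fintype.card G.V

/-- ρ_p(r) = |r|^(p-2) r. -/
def rho (p r : ℝ) : ℝ := |r| ^ (p - 2) * r

/-- `(u, u')` is in the Sobolev space W^{1,p}(0,ℓ): `u'` is integrable with `|u'|^p`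
integrable on (0,ℓ), and `u` is absolutely continuous on [0,ℓ] with derivative `u'`. -/
def IntervalSobolev (ℓ p : ℝ) (u u' : ℝ → ℝ) : Prop :=
  IntegrableOn u' (Ioo 0 ℓ) volume ∧
  IntegrableOn (fun x => |u' x| ^ p) (Ioo 0 ℓ) volume ∧
  ∀ x ∈ Icc (0:ℝ) ℓ, u x = u 0 + ∫ t in (0:ℝ)..x, u' t

/-- `(u, u')` is in W^{1,p̄}(G), continuous at the vertices with vertex values `uV`. -/
def GraphSobolev (G : MetricGraph) (p : G.E → ℝ) (u u' : G.E → ℝ → ℝ) (uV : G.V → ℝ) : Prop :=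
  (∀ e, IntervalSobolev (G.len e) (p e) (u e) (u' e)) ∧
  (∀ e, u e 0 = uV (G.ι e)) ∧
  (∀ e, u e (G.len e) = uV (G.τ e))

/-- `v` is a weak solution of the graph problem (P_ω^f) with data `u, u', uV`. -/
def SolvesGraphProblem (G : MetricGraph) (p : G.E → ℝ) (γ : G.E → ℝ → ℝ)
    (f : G.E → ℝ → ℝ) (ω : G.V → ℝ)
    (v : G.E → ℝ → ℝ) (u u' : G.E → ℝ → ℝ) (uV : G.V → ℝ) : Prop :=
  (∀ e, IntegrableOn (v e) (Ioo 0 (G.len e)) volume) ∧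
  GraphSobolev G p u u' uV ∧
  (∀ e, ∀ᵐ x ∂(volume.restrict (Ioo 0 (G.len e))), v e x = γ e (u e x)) ∧
  ∀ φ φ' : G.E → ℝ → ℝ, ∀ φV : G.V → ℝ, GraphSobolev G p φ φ' φV →
    edgeSum G (fun e => ∫ x in Ioo 0 (G.len e), v e x * φ e x)
      + edgeSum G (fun e => ∫ x in Ioo 0 (G.len e), rho (p e) (u' e x) * φ' e x)
    = edgeSum G (fun e => ∫ x in Ioo 0 (G.len e), f e x * φ e x)
      + vertexSum G (fun w => ω w * φV w)

/-- `v` is a weak solution of the graph problem (P_ω^f). -/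
def IsGraphWeakSolution (G : MetricGraph) (p : G.E → ℝ) (γ : G.E → ℝ → ℝ)
    (f : G.E → ℝ → ℝ) (ω : G.V → ℝ) (v : G.E → ℝ → ℝ) : Prop :=
  ∃ u u' uV, SolvesGraphProblem G p γ f ω v u u' uV

/-- `v` is a weak solution of the interval Neumann problem (P^{γ,f}_{p,a,b}),
with associated Sobolev function `u` (derivative `u'`). -/
def SolvesNeumann (ℓ p : ℝ) (γ f : ℝ → ℝ) (a b : ℝ) (v u u' : ℝ → ℝ) : Prop :=
  IntegrableOn v (Ioo 0 ℓ) volume ∧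
  IntervalSobolev ℓ p u u' ∧
  (∀ᵐ x ∂(volume.restrict (Ioo 0 ℓ)), v x = γ (u x)) ∧
  ∀ φ φ' : ℝ → ℝ, IntervalSobolev ℓ p φ φ' →
    (∫ x in Ioo 0 ℓ, v x * φ x) + (∫ x in Ioo 0 ℓ, rho p (u' x) * φ' x)
    = (∫ x in Ioo 0 ℓ, f x * φ x) + a * φ 0 + b * φ ℓ

/-- `v` is a weak solution of the interval Neumann problem (P^{γ,f}_{p,a,b}). -/
def IsNeumannWeakSolution (ℓ p : ℝ) (γ f : ℝ → ℝ) (a b : ℝ) (v : ℝ → ℝ) : Prop :=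
  ∃ u u', SolvesNeumann ℓ p γ f a b v u u'

end

namespace PoincareAux

open MeasureTheory Set Filter

lemma D_nonneg {ℓ : ℝ} {u' : ℝ → ℝ} : 0 ≤ ∫ t in Ioo (0:ℝ) ℓ, |u' t| :=
  setIntegral_nonneg measurableSet_Ioo (fun _ _ => abs_nonneg _)

variable {ℓ p : ℝ} {u u' : ℝ → ℝ}

lemma sup_dist_le (hu : IntervalSobolev ℓ p u u') {x : ℝ} (hx : x ∈ Icc 0 ℓ) :
    |u x - u 0| ≤ ∫ t in Ioo (0:ℝ) ℓ, |u' t| := by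
  have hint : IntegrableOn u' (Ioc 0 ℓ) := (integrableOn_Ioc_iff_integrableOn_Ioo).mpr hu.1
  rw [hu.2.2 x hx, add_sub_cancel_left]
  calc |∫ t in (0:ℝ)..x, u' t| ≤ ∫ t in (0:ℝ)..x, |u' t| :=
        intervalIntegral.abs_integral_le_integral_abs hx.1
    _ = ∫ t in Ioc (0:ℝ) x, |u' t| := intervalIntegral.integral_of_le hx.1
    _ ≤ ∫ t in Ioc (0:ℝ) ℓ, |u' t| := by
        refine setIntegral_mono_set hint.abs (Eventually.of_forall fun t => abs_nonneg _) ?_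
        exact HasSubset.Subset.eventuallyLE (Ioc_subset_Ioc_right hx.2)
    _ = ∫ t in Ioo (0:ℝ) ℓ, |u' t| := integral_Ioc_eq_integral_Ioo

lemma integrableOn (hu : IntervalSobolev ℓ p u u') : IntegrableOn u (Ioo 0 ℓ) := by
  have hIcc : IntegrableOn u' (Icc 0 ℓ) := (integrableOn_Icc_iff_integrableOn_Ioo).mpr hu.1
  have hcont : ContinuousOn (fun x => u 0 + ∫ t in Ioc (0:ℝ) x, u' t) (Icc 0 ℓ) :=
    continuousOn_const.add (intervalIntegral.continuousOn_primitive hIcc)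
  have hint : IntegrableOn (fun x => u 0 + ∫ t in Ioc (0:ℝ) x, u' t) (Icc 0 ℓ) :=
    hcont.integrableOn_compact isCompact_Icc
  refine (hint.mono_set Ioo_subset_Icc_self).congr_fun ?_ measurableSet_Ioo
  intro x hx
  rw [hu.2.2 x (Ioo_subset_Icc_self hx), intervalIntegral.integral_of_le hx.1.le]

lemma integral_near_mean (hℓ : 0 < ℓ) (hu : IntervalSobolev ℓ p u u') :
    |(∫ x in Ioo (0:ℝ) ℓ, u x) - ℓ * u 0| ≤ ℓ * ∫ t in Ioo (0:ℝ) ℓ, |u' t| := by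
  set D := ∫ t in Ioo (0:ℝ) ℓ, |u' t| with hD
  have hvol : (volume (Ioo (0:ℝ) ℓ)).toReal = ℓ := by
    rw [Real.volume_Ioo, sub_zero, ENNReal.toReal_ofReal hℓ.le]
  have h1 : (∫ x in Ioo (0:ℝ) ℓ, u x) - ℓ * u 0
      = ∫ x in Ioo (0:ℝ) ℓ, (u x - u 0) := by
    rw [integral_sub (integrableOn hu) ((integrableOn_const_iff).mpr (Or.inr (by
      rw [Real.volume_Ioo]; exact ENNReal.ofReal_lt_top)))]
    rw [setIntegral_const, measureReal_def, hvol, smul_eq_mul]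
  rw [h1]
  have := norm_setIntegral_le_of_norm_le_const (f := fun x => u x - u 0)
    (s := Ioo (0:ℝ) ℓ) (μ := volume) (C := D)
    (by rw [Real.volume_Ioo]; exact ENNReal.ofReal_lt_top)
    (fun x hx => by
      rw [Real.norm_eq_abs]; exact sup_dist_le hu (Ioo_subset_Icc_self hx))
  rw [Real.norm_eq_abs, measureReal_def, hvol] at this
  linarith

lemma lp_le (hℓ : 0 < ℓ) (hp : 1 < p) (hu : IntervalSobolev ℓ p u u') {C : ℝ} (hC : 0 ≤ C)
    (hb : ∀ x ∈ Ioo (0:ℝ) ℓ, |u x| ≤ C) :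
    (∫ x in Ioo (0:ℝ) ℓ, |u x| ^ p) ^ (1/p) ≤ ℓ ^ (1/p) * C := by
  have hp0 : 0 < p := by linarith
  have hvol : (volume (Ioo (0:ℝ) ℓ)).toReal = ℓ := by
    rw [Real.volume_Ioo, sub_zero, ENNReal.toReal_ofReal hℓ.le]
  have hfin : volume (Ioo (0:ℝ) ℓ) < ⊤ := by
    rw [Real.volume_Ioo]; exact ENNReal.ofReal_lt_top
  have hmeas : AEStronglyMeasurable (fun x => |u x| ^ p) (volume.restrict (Ioo 0 ℓ)) := by
    have : Continuous fun t : ℝ => |t| ^ p :=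
      continuous_abs.rpow_const (fun x => Or.inr hp0.le)
    exact this.comp_aestronglyMeasurable (integrableOn hu).aestronglyMeasurable
  have hint : IntegrableOn (fun x => |u x| ^ p) (Ioo 0 ℓ) := by
    refine Integrable.mono' (g := fun _ => C ^ p)
      ((integrableOn_const_iff).mpr (Or.inr hfin)) hmeas ?_
    refine (ae_restrict_iff' measurableSet_Ioo).mpr (Eventually.of_forall fun x hx => ?_)
    rw [Real.norm_eq_abs, abs_of_nonneg (Real.rpow_nonneg (abs_nonneg _) _)]
    exact Real.rpow_le_rpow (abs_nonneg _) (hb x hx) hp0.le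
  have h1 : (∫ x in Ioo (0:ℝ) ℓ, |u x| ^ p) ≤ ℓ * C ^ p := by
    calc (∫ x in Ioo (0:ℝ) ℓ, |u x| ^ p) ≤ ∫ _x in Ioo (0:ℝ) ℓ, C ^ p := by
          refine setIntegral_mono_on hint ((integrableOn_const_iff).mpr (Or.inr hfin))
            measurableSet_Ioo fun x hx => ?_
          exact Real.rpow_le_rpow (abs_nonneg _) (hb x hx) hp0.le
      _ = ℓ * C ^ p := by rw [setIntegral_const, measureReal_def, hvol, smul_eq_mul]
  calc (∫ x in Ioo (0:ℝ) ℓ, |u x| ^ p) ^ (1/p) ≤ (ℓ * C ^ p) ^ (1/p) :=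
        Real.rpow_le_rpow (setIntegral_nonneg measurableSet_Ioo
          (fun x _ => Real.rpow_nonneg (abs_nonneg _) _)) h1 (by positivity)
    _ = ℓ ^ (1/p) * C := by
        rw [Real.mul_rpow hℓ.le (Real.rpow_nonneg hC _),
          ← Real.rpow_mul hC, mul_one_div, div_self hp0.ne', Real.rpow_one]

lemma l1_le (hℓ : 0 < ℓ) (hp : 1 < p) (hu : IntervalSobolev ℓ p u u') :
    (∫ x in Ioo (0:ℝ) ℓ, |u' x|)
      ≤ ℓ ^ (1 - 1/p) * (∫ x in Ioo (0:ℝ) ℓ, |u' x| ^ p) ^ (1/p) := by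
  have hp0 : 0 < p := by linarith
  set q : ℝ := p / (p - 1) with hq
  have hpq : p.HolderConjugate q := (Real.holderConjugate_iff_eq_conjExponent hp).mpr rfl
  set μ := volume.restrict (Ioo (0:ℝ) ℓ) with hμ
  haveI : IsFiniteMeasure μ := by
    constructor
    rw [hμ, Measure.restrict_apply_univ, Real.volume_Ioo]
    exact ENNReal.ofReal_lt_top
  have hP0 : (ENNReal.ofReal p) ≠ 0 := by
    simp [ENNReal.ofReal_eq_zero, not_le, hp0]
  have hPt : (ENNReal.ofReal p) ≠ ⊤ := ENNReal.ofReal_ne_top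
  have hmem : MemLp u' (ENNReal.ofReal p) μ := by
    rw [← memLp_norm_rpow_iff (q := ENNReal.ofReal p) hu.1.aestronglyMeasurable hP0 hPt]
    rw [ENNReal.div_self hP0 hPt, memLp_one_iff_integrable]
    have : (fun x => ‖u' x‖ ^ (ENNReal.ofReal p).toReal) = fun x => |u' x| ^ p := by
      funext x; rw [Real.norm_eq_abs, ENNReal.toReal_ofReal hp0.le]
    rw [this]; exact hu.2.1
  have hone : MemLp (fun _ : ℝ => (1:ℝ)) (ENNReal.ofReal q) μ := memLp_const 1
  have := integral_mul_norm_le_Lp_mul_Lq (μ := μ) hpq hmem hone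
  simp only [norm_one, mul_one, Real.norm_eq_abs, Real.one_rpow] at this
  rw [integral_const, smul_eq_mul, mul_one] at this
  have hvol : (μ univ).toReal = ℓ := by
    rw [hμ, Measure.restrict_apply_univ, Real.volume_Ioo, sub_zero,
      ENNReal.toReal_ofReal hℓ.le]
  rw [measureReal_def, hvol] at this
  have hq1 : 1/q = 1 - 1/p := by rw [one_div, one_div, ← hpq.one_sub_inv]
  rw [hq1] at this
  calc (∫ x in Ioo (0:ℝ) ℓ, |u' x|)
      ≤ (∫ x, |u' x| ^ p ∂μ) ^ (1/p) * ℓ ^ (1 - 1/p) := this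
    _ = ℓ ^ (1 - 1/p) * (∫ x in Ioo (0:ℝ) ℓ, |u' x| ^ p) ^ (1/p) := mul_comm _ _

end PoincareAux


/-- Poincaré inequality on a compact metric graph. -/
theorem poincare_inequality_metric_graph
    (G : MetricGraph) (p : G.E → ℝ) (hp : ∀ e, 1 < p e) :
    ∃ lam : ℝ, 0 < lam ∧
      ∀ (u u' : G.E → ℝ → ℝ) (uV : G.V → ℝ), GraphSobolev G p u u' uV →
        edgeSum G (fun e => ∫ x in Ioo (0:ℝ) (G.len e), u e x) = 0 →
        lam * edgeSum G (fun e => (∫ x in Ioo (0:ℝ) (G.len e), |u e x| ^ p e) ^ (1 / p e))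
          ≤ edgeSum G (fun e => (∫ x in Ioo (0:ℝ) (G.len e), |u' e x| ^ p e) ^ (1 / p e)) := by
  classical
  letI := G.fintypeE
  letI := G.fintypeV
  by_cases hE : IsEmpty G.E
  · refine ⟨1, one_pos, fun u u' uV _ _ => ?_⟩
    simp [edgeSum, Finset.univ_eq_empty]
  haveI : Nonempty G.E := not_isEmpty_iff.mp hE
  -- single edge step bound
  have hstep : ∀ (u u' : G.E → ℝ → ℝ) (uV : G.V → ℝ), GraphSobolev G p u u' uV →
      ∀ e : G.E, |uV (G.ι e) - uV (G.τ e)|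
        ≤ ∑ e', ∫ x in Ioo (0:ℝ) (G.len e'), |u' e' x| := by
    intro u u' uV hu e
    have h := PoincareAux.sup_dist_le (hu.1 e) (x := G.len e) ⟨(G.len_pos e).le, le_rfl⟩
    rw [hu.2.2 e, hu.2.1 e, abs_sub_comm] at h
    exact h.trans (Finset.single_le_sum
      (f := fun e' => ∫ x in Ioo (0:ℝ) (G.len e'), |u' e' x|)
      (fun e' _ => PoincareAux.D_nonneg) (Finset.mem_univ e))
  -- walk bound between any two vertices
  have hwalk : ∀ v w : G.V, ∃ n : ℕ, ∀ (u u' : G.E → ℝ → ℝ) (uV : G.V → ℝ),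
      GraphSobolev G p u u' uV →
      |uV v - uV w| ≤ (n : ℝ) * ∑ e, ∫ x in Ioo (0:ℝ) (G.len e), |u' e x| := by
    intro v w
    induction G.connected v w with
    | refl => exact ⟨0, fun u u' uV _ => by simp⟩
    | @tail b c hab hbc ih =>
      obtain ⟨n, hn⟩ := ih
      obtain ⟨e, he⟩ := hbc
      refine ⟨n + 1, fun u u' uV hu => ?_⟩
      set D := ∑ e, ∫ x in Ioo (0:ℝ) (G.len e), |u' e x| with hD
      have h2 : |uV b - uV c| ≤ D := by
        rcases he with ⟨h1', h2'⟩ | ⟨h1', h2'⟩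
        · rw [← h1', ← h2']; exact hstep u u' uV hu e
        · rw [abs_sub_comm, ← h1', ← h2']; exact hstep u u' uV hu e
      calc |uV v - uV c| ≤ |uV v - uV b| + |uV b - uV c| := abs_sub_le _ _ _
        _ ≤ (n : ℝ) * D + D := add_le_add (hn u u' uV hu) h2
        _ = ((n + 1 : ℕ) : ℝ) * D := by push_cast; ring
  choose N hN using hwalk
  set Nm : ℕ := Finset.univ.sup (fun vw : G.V × G.V => N vw.1 vw.2) with hNmdef
  have hNm : ∀ v w : G.V, (N v w : ℝ) ≤ (Nm : ℝ) := fun v w =>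
    Nat.cast_le.mpr (Finset.le_sup (f := fun vw : G.V × G.V => N vw.1 vw.2)
      (Finset.mem_univ (v, w)))
  obtain ⟨v₀⟩ := G.nonemptyV
  set L := ∑ e, G.len e with hLdef
  have hL : 0 < L := Finset.sum_pos (fun e _ => G.len_pos e) Finset.univ_nonempty
  set C₁ : ℝ := 2 * (Nm : ℝ) + 2 with hC₁def
  have hC₁ : 0 < C₁ := by positivity
  set S := ∑ e, (G.len e) ^ (1 / p e) with hSdef
  have hS : 0 < S := Finset.sum_pos
    (fun e _ => Real.rpow_pos_of_pos (G.len_pos e) _) Finset.univ_nonempty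
  set K := ∑ e, (G.len e) ^ (1 - 1 / p e) with hKdef
  have hK : 0 < K := Finset.sum_pos
    (fun e _ => Real.rpow_pos_of_pos (G.len_pos e) _) Finset.univ_nonempty
  refine ⟨(S * C₁ * K + 1)⁻¹, inv_pos.mpr (by positivity), ?_⟩
  intro u u' uV hu hmean
  simp only [edgeSum] at hmean ⊢
  set D := ∑ e, ∫ x in Ioo (0:ℝ) (G.len e), |u' e x| with hDdef
  have hD0 : 0 ≤ D := Finset.sum_nonneg fun e _ => PoincareAux.D_nonneg
  have hDe : ∀ e : G.E, (∫ x in Ioo (0:ℝ) (G.len e), |u' e x|) ≤ D := fun e =>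
    Finset.single_le_sum (f := fun e' => ∫ x in Ioo (0:ℝ) (G.len e'), |u' e' x|)
      (fun e' _ => PoincareAux.D_nonneg) (Finset.mem_univ e)
  have hdist : ∀ v w : G.V, |uV v - uV w| ≤ (Nm : ℝ) * D := fun v w =>
    (hN v w u u' uV hu).trans (mul_le_mul_of_nonneg_right (hNm v w) hD0)
  -- mean-zero bound
  have hmean' : |∑ e, G.len e * uV (G.ι e)| ≤ L * D := by
    have h1 : ∀ e ∈ Finset.univ (α := G.E),
        |G.len e * uV (G.ι e) - ∫ x in Ioo (0:ℝ) (G.len e), u e x| ≤ G.len e * D := by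
      intro e _
      have h := PoincareAux.integral_near_mean (G.len_pos e) (hu.1 e)
      rw [hu.2.1 e] at h
      rw [abs_sub_comm]
      exact h.trans (mul_le_mul_of_nonneg_left (hDe e) (G.len_pos e).le)
    calc |∑ e, G.len e * uV (G.ι e)|
        = |∑ e, (G.len e * uV (G.ι e) - ∫ x in Ioo (0:ℝ) (G.len e), u e x)| := by
          rw [Finset.sum_sub_distrib, hmean, sub_zero]
      _ ≤ ∑ e, |G.len e * uV (G.ι e) - ∫ x in Ioo (0:ℝ) (G.len e), u e x| :=
          Finset.abs_sum_le_sum_abs _ _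
      _ ≤ ∑ e, G.len e * D := Finset.sum_le_sum h1
      _ = L * D := by rw [hLdef, Finset.sum_mul]
  -- bound on uV v₀
  have hv0 : |uV v₀| ≤ ((Nm : ℝ) + 1) * D := by
    have h1 : |∑ e, G.len e * uV (G.ι e) - L * uV v₀| ≤ L * ((Nm : ℝ) * D) := by
      rw [hLdef, Finset.sum_mul, ← Finset.sum_sub_distrib]
      refine (Finset.abs_sum_le_sum_abs _ _).trans ?_
      have h2 : ∀ e ∈ Finset.univ (α := G.E),
          |G.len e * uV (G.ι e) - G.len e * uV v₀| ≤ G.len e * ((Nm : ℝ) * D) := by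
        intro e _
        rw [← mul_sub, abs_mul, abs_of_nonneg (G.len_pos e).le]
        exact mul_le_mul_of_nonneg_left (hdist (G.ι e) v₀) (G.len_pos e).le
      calc ∑ e, |G.len e * uV (G.ι e) - G.len e * uV v₀|
          ≤ ∑ e, G.len e * ((Nm : ℝ) * D) := Finset.sum_le_sum h2
        _ = L * ((Nm : ℝ) * D) := by rw [hLdef, Finset.sum_mul]
    have h3 : L * |uV v₀| ≤ L * D + L * ((Nm : ℝ) * D) := by
      have h4 : |L * uV v₀| ≤ |∑ e, G.len e * uV (G.ι e)|
          + |∑ e, G.len e * uV (G.ι e) - L * uV v₀| := by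
        have h5 := abs_add_le (L * uV v₀ - ∑ e, G.len e * uV (G.ι e))
          (∑ e, G.len e * uV (G.ι e))
        rw [sub_add_cancel, abs_sub_comm] at h5
        linarith [h5]
      rw [abs_mul, abs_of_nonneg hL.le] at h4
      linarith
    have h5 : L * |uV v₀| ≤ L * (((Nm : ℝ) + 1) * D) := by ring_nf; ring_nf at h3; linarith
    exact le_of_mul_le_mul_left h5 hL
  -- sup bound on each edge
  have hsup : ∀ e : G.E, ∀ x ∈ Ioo (0:ℝ) (G.len e), |u e x| ≤ C₁ * D := by
    intro e x hx
    have h1 : |u e x - uV (G.ι e)| ≤ D := by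
      have h := PoincareAux.sup_dist_le (hu.1 e) (Ioo_subset_Icc_self hx)
      rw [hu.2.1 e] at h
      exact h.trans (hDe e)
    have t1 : |u e x| ≤ |u e x - uV (G.ι e)| + |uV (G.ι e)| := by
      have := abs_add_le (u e x - uV (G.ι e)) (uV (G.ι e))
      rwa [sub_add_cancel] at this
    have t2 : |uV (G.ι e)| ≤ |uV (G.ι e) - uV v₀| + |uV v₀| := by
      have := abs_add_le (uV (G.ι e) - uV v₀) (uV v₀)
      rwa [sub_add_cancel] at this
    have h2 := hdist (G.ι e) v₀
    rw [hC₁def]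
    linarith
  -- Lp bound
  have hA : ∑ e, (∫ x in Ioo (0:ℝ) (G.len e), |u e x| ^ p e) ^ (1 / p e)
      ≤ S * (C₁ * D) := by
    rw [hSdef, Finset.sum_mul]
    refine Finset.sum_le_sum fun e _ => ?_
    exact PoincareAux.lp_le (G.len_pos e) (hp e) (hu.1 e) (by positivity) (hsup e)
  -- Hölder bound
  set B := fun e : G.E => (∫ x in Ioo (0:ℝ) (G.len e), |u' e x| ^ p e) ^ (1 / p e) with hBdef
  have hB0 : ∀ e, 0 ≤ B e := fun e => Real.rpow_nonneg
    (setIntegral_nonneg measurableSet_Ioo fun x _ => Real.rpow_nonneg (abs_nonneg _) _) _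
  have hBsum0 : 0 ≤ ∑ e, B e := Finset.sum_nonneg fun e _ => hB0 e
  have hDB : D ≤ K * ∑ e, B e := by
    have h1 : ∀ e ∈ Finset.univ (α := G.E),
        (∫ x in Ioo (0:ℝ) (G.len e), |u' e x|) ≤ K * B e := by
      intro e _
      refine (PoincareAux.l1_le (G.len_pos e) (hp e) (hu.1 e)).trans ?_
      refine mul_le_mul_of_nonneg_right ?_ (hB0 e)
      exact Finset.single_le_sum (f := fun e' => (G.len e') ^ (1 - 1 / p e'))
        (fun e' _ => (Real.rpow_pos_of_pos (G.len_pos e') _).le) (Finset.mem_univ e)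
    calc D ≤ ∑ e, K * B e := Finset.sum_le_sum h1
      _ = K * ∑ e, B e := by rw [Finset.mul_sum]
  -- conclusion
  have hfinal : ∑ e, (∫ x in Ioo (0:ℝ) (G.len e), |u e x| ^ p e) ^ (1 / p e)
      ≤ (S * C₁ * K) * ∑ e, B e := by
    refine hA.trans ?_
    calc S * (C₁ * D) ≤ S * (C₁ * (K * ∑ e, B e)) := by
          refine mul_le_mul_of_nonneg_left (mul_le_mul_of_nonneg_left hDB hC₁.le) hS.le
      _ = (S * C₁ * K) * ∑ e, B e := by ring
  have hcoef : (S * C₁ * K + 1)⁻¹ * (S * C₁ * K) ≤ 1 := by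
    rw [inv_mul_le_iff₀ (by positivity)]
    nlinarith
  calc (S * C₁ * K + 1)⁻¹ * ∑ e, (∫ x in Ioo (0:ℝ) (G.len e), |u e x| ^ p e) ^ (1 / p e)
      ≤ (S * C₁ * K + 1)⁻¹ * ((S * C₁ * K) * ∑ e, B e) :=
        mul_le_mul_of_nonneg_left hfinal (by positivity)
    _ = ((S * C₁ * K + 1)⁻¹ * (S * C₁ * K)) * ∑ e, B e := by ring
    _ ≤ 1 * ∑ e, B e := mul_le_mul_of_nonneg_right hcoef hBsum0
    _ = ∑ e, B e := one_mul _
end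

section
/- Let G be a connected compact metric graph with exponents p̄ = (p_e), 1 < p_e < ∞. There exists a constant C > 0 such that every u ∈ W^{1,p̄}(G) satisfies Σ_{e∈E} ( ∫₀^{ℓ_e} |u_e|^{p_e} )^{1/p_e} ≤ C · ( Σ_{e∈E} ( ∫₀^{ℓ_e} |u_e'|^{p_e} )^{1/p_e} + | Σ_{e∈E} ∫₀^{ℓ_e} u_e | ) (equivalent formulation of the Poincaré inequality on a compact metric graph). -/
open MeasureTheory Set Filter

namespace PoincareAux

lemma memLp_of_int {p : ℝ} (hp : 1 < p) {s : Set ℝ} {f : ℝ → ℝ}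
    (hf : IntegrableOn f s) (hfp : IntegrableOn (fun x => |f x| ^ p) s) :
    MemLp f (ENNReal.ofReal p) (volume.restrict s) := by
  have hq0 : ENNReal.ofReal p ≠ 0 := by
    simp only [ne_eq, ENNReal.ofReal_eq_zero, not_le]; linarith
  have hqt : ENNReal.ofReal p ≠ ⊤ := ENNReal.ofReal_ne_top
  refine (memLp_norm_rpow_iff (q := ENNReal.ofReal p) (p := ENNReal.ofReal p)
    hf.aestronglyMeasurable hq0 hqt).1 ?_
  rw [ENNReal.div_self hq0 hqt, memLp_one_iff_integrable]
  have h : (fun x => ‖f x‖ ^ (ENNReal.ofReal p).toReal) = fun x => |f x| ^ p := by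
    ext x; rw [Real.norm_eq_abs, ENNReal.toReal_ofReal (by linarith)]
  rw [h]; exact hfp

lemma holder {ℓ p : ℝ} (hℓ : 0 < ℓ) (hp : 1 < p) {f : ℝ → ℝ}
    (hf : IntegrableOn f (Ioo 0 ℓ)) (hfp : IntegrableOn (fun x => |f x| ^ p) (Ioo 0 ℓ)) :
    ∫ x in Ioo 0 ℓ, |f x| ≤ ℓ ^ (1 - 1/p) * (∫ x in Ioo 0 ℓ, |f x| ^ p) ^ (1/p) := by
  set μ := volume.restrict (Ioo (0:ℝ) ℓ) with hμ
  haveI : IsFiniteMeasure μ := ⟨by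
    rw [Measure.restrict_apply_univ]; exact measure_Ioo_lt_top⟩
  have hpq : p.HolderConjugate (Real.conjExponent p) := Real.HolderConjugate.conjExponent hp
  set q := Real.conjExponent p with hqdef
  have h := integral_mul_norm_le_Lp_mul_Lq (μ := μ) hpq (memLp_of_int hp hf hfp)
    (memLp_const (1:ℝ))
  simp only [norm_one, mul_one, Real.one_rpow, Real.norm_eq_abs] at h
  have h1 : ∫ (_ : ℝ), (1:ℝ) ∂μ = ℓ := by
    simp [hμ, Real.volume_Ioo, ENNReal.toReal_ofReal hℓ.le, hℓ.le]
  rw [h1] at h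
  have h2 : (1:ℝ)/q = 1 - 1/p := by
    have := hpq.inv_add_inv_eq_one
    rw [one_div, one_div]; linarith
  rw [h2] at h
  calc ∫ x in Ioo 0 ℓ, |f x| ≤ (∫ a, |f a| ^ p ∂μ) ^ (1/p) * ℓ ^ (1 - 1/p) := h
    _ = ℓ ^ (1 - 1/p) * (∫ x in Ioo 0 ℓ, |f x| ^ p) ^ (1/p) := by rw [mul_comm]

lemma abs_sub_le_int {ℓ p : ℝ} {u u' : ℝ → ℝ} (h : IntervalSobolev ℓ p u u')
    {x : ℝ} (hx : x ∈ Icc 0 ℓ) :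
    |u x - u 0| ≤ ∫ t in Ioo 0 ℓ, |u' t| := by
  obtain ⟨h1, h2, h3⟩ := h
  rw [h3 x hx, add_sub_cancel_left]
  refine (intervalIntegral.abs_integral_le_integral_abs hx.1).trans ?_
  rw [intervalIntegral.integral_of_le hx.1]
  have hint : IntegrableOn (fun t => |u' t|) (Ioc 0 ℓ) := by
    rw [integrableOn_Ioc_iff_integrableOn_Ioo]
    exact h1.abs
  calc ∫ t in Ioc 0 x, |u' t| ≤ ∫ t in Ioc 0 ℓ, |u' t| :=
        setIntegral_mono_set hint (Eventually.of_forall fun t => abs_nonneg _)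
          (HasSubset.Subset.eventuallyLE (Ioc_subset_Ioc_right hx.2))
    _ = ∫ t in Ioo 0 ℓ, |u' t| := integral_Ioc_eq_integral_Ioo

lemma integrable_parts {ℓ p : ℝ} (hp : 1 < p) {u u' : ℝ → ℝ}
    (h : IntervalSobolev ℓ p u u') :
    IntegrableOn u (Ioo 0 ℓ) ∧ IntegrableOn (fun x => |u x| ^ p) (Ioo 0 ℓ) := by
  obtain ⟨h1, h2, h3⟩ := h
  have hIcc : IntegrableOn u' (Icc 0 ℓ) := by
    rw [integrableOn_Icc_iff_integrableOn_Ioo]; exact h1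
  set g : ℝ → ℝ := fun x => u 0 + ∫ t in (0:ℝ)..x, u' t with hg
  have hgc : ContinuousOn g (Icc 0 ℓ) := by
    apply continuousOn_const.add
    refine (intervalIntegral.continuousOn_primitive (f := u') (a := 0) (b := ℓ)
      (μ := volume) hIcc).congr fun x hx => ?_
    rw [intervalIntegral.integral_of_le hx.1]
  have hae : g =ᵐ[volume.restrict (Ioo 0 ℓ)] u := by
    rw [EventuallyEq, ae_restrict_iff' measurableSet_Ioo]
    exact Eventually.of_forall fun x hx => (h3 x (Ioo_subset_Icc_self hx)).symm
  have hgp : ContinuousOn (fun x => |g x| ^ p) (Icc 0 ℓ) :=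
    hgc.abs.rpow_const fun x _ => Or.inr (by linarith)
  have haep : (fun x => |g x| ^ p) =ᵐ[volume.restrict (Ioo 0 ℓ)]
      (fun x => |u x| ^ p) := by
    filter_upwards [hae] with x hx; rw [hx]
  exact ⟨(((hgc.integrableOn_compact isCompact_Icc).mono_set Ioo_subset_Icc_self).congr hae),
    (((hgp.integrableOn_compact isCompact_Icc).mono_set Ioo_subset_Icc_self).congr haep)⟩

end PoincareAux

open PoincareAux

/-- equivalent formulation of the Poincaré inequality on a compact metric graph. -/
theorem poincare_inequality_metric_graph_mean_form
    (G : MetricGraph) (p : G.E → ℝ) (hp : ∀ e, 1 < p e) :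
    ∃ C : ℝ, 0 < C ∧
      ∀ (u u' : G.E → ℝ → ℝ) (uV : G.V → ℝ), GraphSobolev G p u u' uV →
        edgeSum G (fun e => (∫ x in Ioo (0:ℝ) (G.len e), |u e x| ^ p e) ^ (1 / p e))
          ≤ C * (edgeSum G (fun e => (∫ x in Ioo (0:ℝ) (G.len e), |u' e x| ^ p e) ^ (1 / p e))
                 + |edgeSum G (fun e => ∫ x in Ioo (0:ℝ) (G.len e), u e x)|) := by
  classical
  letI := G.fintypeE
  letI := G.fintypeV
  haveI := G.nonemptyV
  have hedge : ∀ F : G.E → ℝ, edgeSum G F = ∑ e, F e := fun F => rfl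
  by_cases hE : Nonempty G.E
  swap
  · refine ⟨1, one_pos, fun u u' uV _ => ?_⟩
    haveI : IsEmpty G.E := not_nonempty_iff.1 hE
    simp only [hedge, Finset.univ_eq_empty, Finset.sum_empty]
    simp
  haveI := hE
  -- connectivity bound
  have key : ∀ v w : G.V, Relation.ReflTransGen
      (fun a b => ∃ e, (G.ι e = a ∧ G.τ e = b) ∨ (G.ι e = b ∧ G.τ e = a)) v w →
      ∃ n : ℕ, ∀ (u u' : G.E → ℝ → ℝ) (uV : G.V → ℝ), GraphSobolev G p u u' uV →
        |uV v - uV w| ≤ n * ∑ e, ∫ x in Ioo 0 (G.len e), |u' e x| := by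
    intro v w hvw
    induction hvw with
    | refl => exact ⟨0, fun u u' uV _ => by simp⟩
    | @tail b c hab hbc ih =>
      obtain ⟨n, hn⟩ := ih
      obtain ⟨e, he⟩ := hbc
      refine ⟨n + 1, fun u u' uV hu => ?_⟩
      obtain ⟨hu1, hu2, hu3⟩ := hu
      have hT0 : ∀ e', (0:ℝ) ≤ ∫ x in Ioo 0 (G.len e'), |u' e' x| :=
        fun e' => integral_nonneg fun x => abs_nonneg _
      have hTe : ∫ x in Ioo 0 (G.len e), |u' e x|
          ≤ ∑ e', ∫ x in Ioo 0 (G.len e'), |u' e' x| :=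
        Finset.single_le_sum (fun e' _ => hT0 e') (Finset.mem_univ e)
      have hlen : G.len e ∈ Icc (0:ℝ) (G.len e) := ⟨(G.len_pos e).le, le_rfl⟩
      have habs := abs_sub_le_int (hu1 e) hlen
      have hstep : |uV b - uV c| ≤ ∫ x in Ioo 0 (G.len e), |u' e x| := by
        rcases he with ⟨hι, hτ⟩ | ⟨hι, hτ⟩
        · rw [← hι, ← hτ, ← hu2 e, ← hu3 e, abs_sub_comm]; exact habs
        · rw [← hι, ← hτ, ← hu2 e, ← hu3 e]; exact habs
      have hvb := hn u u' uV ⟨hu1, hu2, hu3⟩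
      calc |uV v - uV c| ≤ |uV v - uV b| + |uV b - uV c| := abs_sub_le _ _ _
        _ ≤ n * (∑ e', ∫ x in Ioo 0 (G.len e'), |u' e' x|)
            + ∑ e', ∫ x in Ioo 0 (G.len e'), |u' e' x| :=
          add_le_add hvb (hstep.trans hTe)
        _ = (↑(n+1)) * ∑ e', ∫ x in Ioo 0 (G.len e'), |u' e' x| := by push_cast; ring
  obtain ⟨v₀⟩ := G.nonemptyV
  choose n hn using fun v => key v v₀ (G.connected v v₀)
  set N := Finset.univ.sup n with hNdef
  set L := ∑ e, G.len e with hLdef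
  have hLpos : 0 < L := Finset.sum_pos (fun e _ => G.len_pos e) Finset.univ_nonempty
  set K := ∑ e, G.len e ^ (1 - 1/(p e)) with hKdef
  have hK0 : 0 ≤ K := Finset.sum_nonneg fun e _ => Real.rpow_nonneg (G.len_pos e).le _
  set P := ∑ e, G.len e ^ (1/(p e)) with hPdef
  have hP0 : 0 ≤ P := Finset.sum_nonneg fun e _ => Real.rpow_nonneg (G.len_pos e).le _
  set M : ℝ := (N : ℝ) + 1 with hMdef
  have hM0 : (0:ℝ) < M := by positivity
  have hPL0 : 0 ≤ P / L := div_nonneg hP0 hLpos.le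
  have hPMK0 : 0 ≤ 2 * P * M * K :=
    mul_nonneg (mul_nonneg (mul_nonneg (by norm_num) hP0) hM0.le) hK0
  refine ⟨P / L + 2 * P * M * K + 1,
    add_pos_of_nonneg_of_pos (add_nonneg hPL0 hPMK0) one_pos, fun u u' uV hu => ?_⟩
  obtain ⟨hu1, hu2, hu3⟩ := hu
  simp only [hedge]
  set T := ∑ e, ∫ x in Ioo 0 (G.len e), |u' e x| with hTdef
  set D := ∑ e, (∫ x in Ioo (0:ℝ) (G.len e), |u' e x| ^ p e) ^ (1/(p e)) with hDdef
  set A := |∑ e, ∫ x in Ioo (0:ℝ) (G.len e), u e x| with hAdef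
  have hA0 : 0 ≤ A := abs_nonneg _
  have hTe0 : ∀ e, (0:ℝ) ≤ ∫ x in Ioo 0 (G.len e), |u' e x| :=
    fun e => integral_nonneg fun x => abs_nonneg _
  have hT0 : 0 ≤ T := Finset.sum_nonneg fun e _ => hTe0 e
  have hDe0 : ∀ e, (0:ℝ) ≤ (∫ x in Ioo (0:ℝ) (G.len e), |u' e x| ^ p e) ^ (1/(p e)) :=
    fun e => Real.rpow_nonneg (integral_nonneg fun x => Real.rpow_nonneg (abs_nonneg _) _) _
  have hD0 : 0 ≤ D := Finset.sum_nonneg fun e _ => hDe0 e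
  have hTe : ∀ e, ∫ x in Ioo 0 (G.len e), |u' e x| ≤ T :=
    fun e => Finset.single_le_sum (fun e' _ => hTe0 e') (Finset.mem_univ e)
  have hDe : ∀ e, (∫ x in Ioo (0:ℝ) (G.len e), |u' e x| ^ p e) ^ (1/(p e)) ≤ D :=
    fun e => Finset.single_le_sum (fun e' _ => hDe0 e') (Finset.mem_univ e)
  have hTD : T ≤ K * D := by
    rw [hTdef, hKdef, Finset.sum_mul]
    refine Finset.sum_le_sum fun e _ => ?_
    calc ∫ x in Ioo 0 (G.len e), |u' e x|
        ≤ G.len e ^ (1 - 1/(p e)) * (∫ x in Ioo (0:ℝ) (G.len e), |u' e x| ^ p e) ^ (1/(p e)) :=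
          holder (G.len_pos e) (hp e) (hu1 e).1 (hu1 e).2.1
      _ ≤ G.len e ^ (1 - 1/(p e)) * D :=
          mul_le_mul_of_nonneg_left (hDe e) (Real.rpow_nonneg (G.len_pos e).le _)
  -- pointwise bound relative to uV v₀
  have hnN : ∀ v, (n v : ℝ) ≤ (N : ℝ) :=
    fun v => Nat.cast_le.2 (Finset.le_sup (Finset.mem_univ v))
  have hbound : ∀ e, ∀ x ∈ Icc (0:ℝ) (G.len e), |u e x - uV v₀| ≤ M * T := by
    intro e x hx
    have h1 : |u e x - u e 0| ≤ ∫ t in Ioo 0 (G.len e), |u' e t| := abs_sub_le_int (hu1 e) hx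
    have h2 : |u e 0 - uV v₀| ≤ (n (G.ι e) : ℝ) * T := by
      rw [hu2 e]; exact hn (G.ι e) u u' uV ⟨hu1, hu2, hu3⟩
    have h3 : (n (G.ι e) : ℝ) * T ≤ (N : ℝ) * T :=
      mul_le_mul_of_nonneg_right (hnN _) hT0
    calc |u e x - uV v₀| ≤ |u e x - u e 0| + |u e 0 - uV v₀| := abs_sub_le _ _ _
      _ ≤ T + (N : ℝ) * T := add_le_add (h1.trans (hTe e)) (h2.trans h3)
      _ = M * T := by rw [hMdef]; ring
  have hint := fun e => integrable_parts (hp e) (hu1 e)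
  have hvol : ∀ e, (volume (Ioo (0:ℝ) (G.len e))).toReal = G.len e := by
    intro e
    rw [Real.volume_Ioo, sub_zero, ENNReal.toReal_ofReal (G.len_pos e).le]
  -- bound on |uV v₀|
  have hce : ∀ e, |(∫ x in Ioo (0:ℝ) (G.len e), u e x) - uV v₀ * G.len e|
      ≤ M * T * G.len e := by
    intro e
    have hconst : IntegrableOn (fun _ : ℝ => uV v₀) (Ioo 0 (G.len e)) volume :=
      integrableOn_const measure_Ioo_lt_top.ne
    have hfi : IntegrableOn (fun x => u e x - uV v₀) (Ioo 0 (G.len e)) volume :=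
      (hint e).1.sub hconst
    have h := norm_setIntegral_le_of_norm_le_const (μ := volume)
      (s := Ioo (0:ℝ) (G.len e)) (f := fun x => u e x - uV v₀) (C := M * T)
      measure_Ioo_lt_top
      (fun x hx => by rw [Real.norm_eq_abs]; exact hbound e x (Ioo_subset_Icc_self hx))
    rw [integral_sub (hint e).1 hconst, integral_const, smul_eq_mul,
      measureReal_restrict_apply_univ, Measure.real, hvol e, Real.norm_eq_abs] at h
    calc |(∫ x in Ioo (0:ℝ) (G.len e), u e x) - uV v₀ * G.len e|
        = |(∫ x in Ioo (0:ℝ) (G.len e), u e x) - G.len e * uV v₀| := by rw [mul_comm]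
      _ ≤ M * T * G.len e := h
  have hcL : |uV v₀| * L ≤ A + M * T * L := by
    have hsum : |∑ e, ((∫ x in Ioo (0:ℝ) (G.len e), u e x) - uV v₀ * G.len e)|
        ≤ M * T * L := by
      refine (Finset.abs_sum_le_sum_abs _ _).trans ?_
      rw [hLdef, Finset.mul_sum]
      exact Finset.sum_le_sum fun e _ => hce e
    have hexp : ∑ e, ((∫ x in Ioo (0:ℝ) (G.len e), u e x) - uV v₀ * G.len e)
        = (∑ e, ∫ x in Ioo (0:ℝ) (G.len e), u e x) - uV v₀ * L := by
      rw [Finset.sum_sub_distrib, hLdef, Finset.mul_sum]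
    rw [hexp] at hsum
    have : |uV v₀ * L| ≤ A + M * T * L := by
      have := abs_sub_abs_le_abs_sub ((∑ e, ∫ x in Ioo (0:ℝ) (G.len e), u e x))
        (uV v₀ * L)
      calc |uV v₀ * L| ≤ |∑ e, ∫ x in Ioo (0:ℝ) (G.len e), u e x|
            + |(∑ e, ∫ x in Ioo (0:ℝ) (G.len e), u e x) - uV v₀ * L| := by
            have := abs_sub_le (uV v₀ * L) ((∑ e, ∫ x in Ioo (0:ℝ) (G.len e), u e x)) 0
            simp only [sub_zero] at this
            calc |uV v₀ * L| ≤ |uV v₀ * L - ∑ e, ∫ x in Ioo (0:ℝ) (G.len e), u e x|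
                  + |∑ e, ∫ x in Ioo (0:ℝ) (G.len e), u e x| := this
              _ = _ := by rw [abs_sub_comm]; ring
        _ ≤ A + M * T * L := by rw [hAdef]; exact add_le_add le_rfl hsum
    rwa [abs_mul, abs_of_pos hLpos] at this
  have hc : |uV v₀| ≤ A / L + M * T := by
    rw [div_add' _ _ _ hLpos.ne']
    rw [le_div_iff₀ hLpos]
    calc |uV v₀| * L ≤ A + M * T * L := hcL
      _ = A + M * T * L := rfl
  set S : ℝ := A / L + 2 * M * T with hSdef
  have hS0 : 0 ≤ S :=
    add_nonneg (div_nonneg hA0 hLpos.le)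
      (mul_nonneg (mul_nonneg (by norm_num : (0:ℝ) ≤ 2) hM0.le) hT0)
  have hS : ∀ e, ∀ x ∈ Icc (0:ℝ) (G.len e), |u e x| ≤ S := by
    intro e x hx
    calc |u e x| ≤ |u e x - uV v₀| + |uV v₀| := by
          have := abs_sub_le (u e x) (uV v₀) 0
          simpa using this
      _ ≤ M * T + (A / L + M * T) := add_le_add (hbound e x hx) hc
      _ = S := by rw [hSdef]; ring
  -- per-edge Lp bound
  have hLp : ∀ e, (∫ x in Ioo (0:ℝ) (G.len e), |u e x| ^ p e) ^ (1 / p e)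
      ≤ G.len e ^ (1 / p e) * S := by
    intro e
    have hpe := hp e
    have hp0 : (0:ℝ) < p e := by linarith
    have hconst : IntegrableOn (fun _ : ℝ => S ^ p e) (Ioo 0 (G.len e)) volume :=
      integrableOn_const measure_Ioo_lt_top.ne
    have step1 : ∫ x in Ioo (0:ℝ) (G.len e), |u e x| ^ p e ≤ G.len e * S ^ p e := by
      calc ∫ x in Ioo (0:ℝ) (G.len e), |u e x| ^ p e
          ≤ ∫ _x in Ioo (0:ℝ) (G.len e), S ^ p e :=
            setIntegral_mono_on (hint e).2 hconst measurableSet_Ioo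
              (fun x hx => Real.rpow_le_rpow (abs_nonneg _)
                (hS e x (Ioo_subset_Icc_self hx)) hp0.le)
        _ = G.len e * S ^ p e := by
            rw [integral_const, smul_eq_mul, measureReal_restrict_apply_univ, Measure.real, hvol e]
    have hIpos : 0 ≤ ∫ x in Ioo (0:ℝ) (G.len e), |u e x| ^ p e :=
      integral_nonneg fun x => Real.rpow_nonneg (abs_nonneg _) _
    calc (∫ x in Ioo (0:ℝ) (G.len e), |u e x| ^ p e) ^ (1 / p e)
        ≤ (G.len e * S ^ p e) ^ (1 / p e) :=
          Real.rpow_le_rpow hIpos step1 (one_div_nonneg.mpr hp0.le)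
      _ = G.len e ^ (1 / p e) * (S ^ p e) ^ (1 / p e) :=
          Real.mul_rpow (G.len_pos e).le (Real.rpow_nonneg hS0 _)
      _ = G.len e ^ (1 / p e) * S := by
          rw [← Real.rpow_mul hS0, mul_one_div_cancel hp0.ne', Real.rpow_one]
  -- conclude
  have hfinal : ∑ e, (∫ x in Ioo (0:ℝ) (G.len e), |u e x| ^ p e) ^ (1 / p e) ≤ P * S := by
    calc ∑ e, (∫ x in Ioo (0:ℝ) (G.len e), |u e x| ^ p e) ^ (1 / p e)
        ≤ ∑ e, G.len e ^ (1 / p e) * S := Finset.sum_le_sum fun e _ => hLp e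
      _ = P * S := by rw [hPdef, Finset.sum_mul]
  have hPS : P * S ≤ (P / L) * A + (2 * P * M * K) * D := by
    have h1 : P * S = (P / L) * A + (2 * P * M) * T := by
      rw [hSdef]; field_simp
    have h2 : (2 * P * M) * T ≤ (2 * P * M) * (K * D) :=
      mul_le_mul_of_nonneg_left hTD
        (mul_nonneg (mul_nonneg (by norm_num : (0:ℝ) ≤ 2) hP0) hM0.le)
    rw [h1]
    calc (P / L) * A + (2 * P * M) * T ≤ (P / L) * A + (2 * P * M) * (K * D) :=
        add_le_add le_rfl h2
      _ = (P / L) * A + (2 * P * M * K) * D := by ring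
  refine hfinal.trans (hPS.trans ?_)
  have q1 : 0 ≤ (P / L) * D := mul_nonneg hPL0 hD0
  have q2 : 0 ≤ (2 * P * M * K) * A := mul_nonneg hPMK0 hA0
  have expand : (P / L + 2 * P * M * K + 1) * (D + A)
      = (P / L) * A + (2 * P * M * K) * D
        + ((P / L) * D + (2 * P * M * K) * A + (D + A)) := by ring
  rw [expand]
  exact le_add_of_nonneg_right (add_nonneg (add_nonneg q1 q2) (add_nonneg hD0 hA0))
end

section
/- Let ℓ > 0, 1 < p < ∞, and let γ : ℝ → ℝ be continuous and nondecreasing with γ(ℝ) = ℝ. Let (u_n)_{n∈ℕ} be functions on [0,ℓ], each absolutely continuous with derivative u_n' ∈ L^p(0,ℓ), and suppose there exists M > 0 such that ∫₀^ℓ |γ(u_n(x))| dx ≤ M for all n ∈ ℕ. Then there exists C > 0 such that ‖u_n‖_{L^p(0,ℓ)} ≤ C ( ‖u_n'‖_{L^p(0,ℓ)} + 1 ) for all n ∈ ℕ. -/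
open MeasureTheory Set Filter

/-- if γ is continuous, nondecreasing and surjective and the integrals
∫₀^ℓ |γ(u_n)| are uniformly bounded, then ‖u_n‖_{L^p} ≤ C(‖u_n'‖_{L^p} + 1) uniformly. -/
theorem Lp_bound_from_gamma_L1_bound
    (ℓ : ℝ) (hℓ : 0 < ℓ) (p : ℝ) (hp : 1 < p)
    (γ : ℝ → ℝ) (hγc : Continuous γ) (hγm : Monotone γ) (hγs : Function.Surjective γ)
    (u u' : ℕ → ℝ → ℝ)
    (hmem : ∀ n, IntervalSobolev ℓ p (u n) (u' n))
    (M : ℝ) (hM : 0 < M)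
    (hbd : ∀ n, (∫ x in Ioo (0:ℝ) ℓ, |γ (u n x)|) ≤ M) :
    ∃ C : ℝ, 0 < C ∧ ∀ n,
      (∫ x in Ioo (0:ℝ) ℓ, |u n x| ^ p) ^ (1 / p)
        ≤ C * ((∫ x in Ioo (0:ℝ) ℓ, |u' n x| ^ p) ^ (1 / p) + 1) := by
  have hp0 : 0 < p := lt_trans one_pos hp
  set q : ℝ := Real.conjExponent p with hq_def
  have hpq : p.HolderConjugate q := Real.HolderConjugate.conjExponent hp
  -- choose the threshold K
  set c : ℝ := 2 * M / ℓ + 1 with hc_def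
  have hc : 0 < c := by positivity
  obtain ⟨tp, htp⟩ := hγs c
  obtain ⟨tm, htm⟩ := hγs (-c)
  set K : ℝ := max (max tp (-tm)) 0 with hK_def
  have hK0 : 0 ≤ K := le_max_right _ _
  have hγK : ∀ t : ℝ, K ≤ |t| → c ≤ |γ t| := by
    intro t ht
    rcases le_or_gt 0 t with h0 | h0
    · have h1 : tp ≤ t := by
        have := (le_max_left tp (-tm)).trans (le_max_left _ (0:ℝ))
        rw [abs_of_nonneg h0] at ht; linarith
      have h2 := hγm h1
      rw [htp] at h2
      exact h2.trans (le_abs_self _)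
    · have h1 : t ≤ tm := by
        have := (le_max_right tp (-tm)).trans (le_max_left _ (0:ℝ))
        rw [abs_of_neg h0] at ht; linarith
      have h2 := hγm h1
      rw [htm] at h2
      calc c ≤ -γ t := by linarith
        _ ≤ |γ t| := neg_le_abs _
  have hLp : (0:ℝ) < ℓ ^ (1/p) := Real.rpow_pos_of_pos hℓ _
  have hLq : (0:ℝ) < ℓ ^ (1/q) := Real.rpow_pos_of_pos hℓ _
  refine ⟨ℓ ^ (1/p) * ((K + 1) * (ℓ ^ (1/q) + 1)),
    mul_pos hLp (mul_pos (by linarith) (by linarith)), fun n => ?_⟩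
  obtain ⟨hu'int, hu'p, hFTC⟩ := hmem n
  have hu'Icc : IntegrableOn (u' n) (Icc 0 ℓ) volume :=
    (integrableOn_Icc_iff_integrableOn_Ioo).2 hu'int
  -- continuity of `u n` on `Icc 0 ℓ`
  have hprim : ContinuousOn (fun x => ∫ t in (0:ℝ)..x, u' n t) (Icc 0 ℓ) := by
    have := intervalIntegral.continuousOn_primitive_interval
      (a := (0:ℝ)) (b := ℓ) (μ := volume) (f := u' n) (by rwa [uIcc_of_le hℓ.le])
    rwa [uIcc_of_le hℓ.le] at this
  have hcont : ContinuousOn (u n) (Icc 0 ℓ) :=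
    (continuousOn_const.add hprim).congr fun x hx => hFTC x hx
  have hγu_int : IntegrableOn (fun x => |γ (u n x)|) (Ioo 0 ℓ) volume := by
    have h1 : ContinuousOn (fun x => |γ (u n x)|) (Icc 0 ℓ) :=
      (hγc.comp_continuousOn hcont).abs
    exact (h1.integrableOn_compact isCompact_Icc).mono_set Ioo_subset_Icc_self
  -- existence of a point where `|u n|` is small
  have hx0 : ∃ x₀ ∈ Ioo (0:ℝ) ℓ, |u n x₀| < K := by
    by_contra h
    push_neg at h
    have hmono : ∫ x in Ioo (0:ℝ) ℓ, c ≤ ∫ x in Ioo (0:ℝ) ℓ, |γ (u n x)| := by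
      refine setIntegral_mono_on ((integrableOn_const_iff (by simp)).2 (Or.inr ?_)) hγu_int
        measurableSet_Ioo fun x hx => hγK _ (h x hx)
      simp [Real.volume_Ioo]
    rw [setIntegral_const, measureReal_def, Real.volume_Ioo, sub_zero,
      ENNReal.toReal_ofReal hℓ.le, smul_eq_mul] at hmono
    have := hbd n
    have hcl : ℓ * c = 2 * M + ℓ := by
      rw [hc_def, mul_add, mul_one, mul_div_assoc', mul_comm ℓ, mul_div_assoc, div_self hℓ.ne', mul_one]
    nlinarith
  obtain ⟨x₀, hx₀mem, hx₀⟩ := hx0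
  set I : ℝ := ∫ x in Ioo (0:ℝ) ℓ, |u' n x| with hI_def
  have hI0 : 0 ≤ I := setIntegral_nonneg measurableSet_Ioo fun x _ => abs_nonneg _
  -- pointwise bound
  have hsup : ∀ x ∈ Icc (0:ℝ) ℓ, |u n x| ≤ K + I := by
    intro x hx
    have hx₀Icc : x₀ ∈ Icc (0:ℝ) ℓ := Ioo_subset_Icc_self hx₀mem
    have hint1 : IntervalIntegrable (u' n) volume 0 x := by
      rw [intervalIntegrable_iff_integrableOn_Icc_of_le hx.1]
      exact hu'Icc.mono_set (Icc_subset_Icc le_rfl hx.2)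
    have hint2 : IntervalIntegrable (u' n) volume 0 x₀ := by
      rw [intervalIntegrable_iff_integrableOn_Icc_of_le hx₀Icc.1]
      exact hu'Icc.mono_set (Icc_subset_Icc le_rfl hx₀Icc.2)
    have hdiff : u n x - u n x₀ = ∫ t in x₀..x, u' n t := by
      rw [hFTC x hx, hFTC x₀ hx₀Icc,
        ← intervalIntegral.integral_interval_sub_left hint1 hint2]
      ring
    have habs : |∫ t in x₀..x, u' n t| ≤ I := by
      have h1 : |∫ t in x₀..x, u' n t| ≤ ∫ t in Set.uIoc x₀ x, |u' n t| := by
        simpa [Real.norm_eq_abs] using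
          intervalIntegral.norm_integral_le_integral_norm_uIoc
            (a := x₀) (b := x) (f := u' n) (μ := volume)
      have h2 : ∫ t in Set.uIoc x₀ x, |u' n t| ≤ ∫ t in Ioc (0:ℝ) ℓ, |u' n t| := by
        refine setIntegral_mono_set
          (((integrableOn_Ioc_iff_integrableOn_Ioo).2 hu'int).abs)
          (Eventually.of_forall fun t => abs_nonneg _)
          (HasSubset.Subset.eventuallyLE ?_)
        unfold uIoc
        exact Ioc_subset_Ioc (le_min hx₀mem.1.le hx.1) (max_le hx₀Icc.2 hx.2)
      calc |∫ t in x₀..x, u' n t| ≤ ∫ t in Ioc (0:ℝ) ℓ, |u' n t| := h1.trans h2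
        _ = I := integral_Ioc_eq_integral_Ioo
    calc |u n x| = |u n x₀ + (u n x - u n x₀)| := by ring_nf
      _ ≤ |u n x₀| + |u n x - u n x₀| := abs_add_le _ _
      _ ≤ K + I := by rw [hdiff]; exact add_le_add hx₀.le habs
  -- Hölder's inequality: I ≤ P^(1/p) * ℓ^(1/q)
  set P : ℝ := ∫ x in Ioo (0:ℝ) ℓ, |u' n x| ^ p with hP_def
  have hP0 : 0 ≤ P :=
    setIntegral_nonneg measurableSet_Ioo fun x _ => Real.rpow_nonneg (abs_nonneg _) _
  haveI : IsFiniteMeasure (volume.restrict (Ioo (0:ℝ) ℓ)) := by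
    constructor
    rw [Measure.restrict_apply_univ, Real.volume_Ioo]
    exact ENNReal.ofReal_lt_top
  have hmemp : MemLp (u' n) (ENNReal.ofReal p) (volume.restrict (Ioo (0:ℝ) ℓ)) := by
    have hne0 : ENNReal.ofReal p ≠ 0 := by
      simp [ENNReal.ofReal_eq_zero, not_le, hp0]
    have hnetop : ENNReal.ofReal p ≠ ⊤ := ENNReal.ofReal_ne_top
    refine (memLp_norm_rpow_iff (q := ENNReal.ofReal p) (p := ENNReal.ofReal p)
      hu'int.aestronglyMeasurable hne0 hnetop).1 ?_
    rw [ENNReal.div_self hne0 hnetop, memLp_one_iff_integrable]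
    have : (fun x => ‖u' n x‖ ^ (ENNReal.ofReal p).toReal) = fun x => |u' n x| ^ p := by
      ext x; rw [ENNReal.toReal_ofReal hp0.le, Real.norm_eq_abs]
    rw [this]
    exact hu'p
  have holder : I ≤ P ^ (1/p) * ℓ ^ (1/q) := by
    have h := integral_mul_le_Lp_mul_Lq_of_nonneg (μ := volume.restrict (Ioo (0:ℝ) ℓ))
      hpq (f := fun x => |u' n x|) (g := fun _ => (1:ℝ))
      (Eventually.of_forall fun x => abs_nonneg _)
      (Eventually.of_forall fun x => zero_le_one)
      hmemp.norm (memLp_const 1)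
    simp only [mul_one, Real.one_rpow] at h
    rw [setIntegral_const, measureReal_def, Real.volume_Ioo, sub_zero, ENNReal.toReal_ofReal hℓ.le,
      smul_eq_mul, mul_one] at h
    exact h
  -- conclude
  have hUp_int : IntegrableOn (fun x => |u n x| ^ p) (Ioo 0 ℓ) volume := by
    have h1 : ContinuousOn (fun x => |u n x| ^ p) (Icc 0 ℓ) :=
      hcont.abs.rpow_const fun x _ => Or.inr hp0.le
    exact (h1.integrableOn_compact isCompact_Icc).mono_set Ioo_subset_Icc_self
  have h2 : ∫ x in Ioo (0:ℝ) ℓ, |u n x| ^ p ≤ (K + I) ^ p * ℓ := by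
    have := setIntegral_mono_on hUp_int
      ((integrableOn_const_iff (by simp)).2 (Or.inr (by rw [Real.volume_Ioo]; exact ENNReal.ofReal_lt_top)))
      measurableSet_Ioo
      (fun x hx => Real.rpow_le_rpow (abs_nonneg _) (hsup x (Ioo_subset_Icc_self hx)) hp0.le)
    rwa [setIntegral_const, measureReal_def, Real.volume_Ioo, sub_zero, ENNReal.toReal_ofReal hℓ.le,
      smul_eq_mul, mul_comm] at this
  have hKI0 : 0 ≤ K + I := add_nonneg hK0 hI0
  have h3 : (∫ x in Ioo (0:ℝ) ℓ, |u n x| ^ p) ^ (1/p) ≤ ((K + I) ^ p * ℓ) ^ (1/p) :=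
    Real.rpow_le_rpow (setIntegral_nonneg measurableSet_Ioo
      fun x _ => Real.rpow_nonneg (abs_nonneg _) _) h2 (by positivity)
  have h4 : ((K + I) ^ p * ℓ) ^ (1/p) = (K + I) * ℓ ^ (1/p) := by
    rw [Real.mul_rpow (Real.rpow_nonneg hKI0 _) hℓ.le, ← Real.rpow_mul hKI0,
      mul_one_div_cancel hp0.ne', Real.rpow_one]
  have hD0 : 0 ≤ P ^ (1/p) := Real.rpow_nonneg hP0 _
  calc (∫ x in Ioo (0:ℝ) ℓ, |u n x| ^ p) ^ (1/p)
      ≤ (K + I) * ℓ ^ (1/p) := by rw [← h4]; exact h3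
    _ ≤ ℓ ^ (1/p) * ((K + 1) * (ℓ ^ (1/q) + 1)) * (P ^ (1/p) + 1) := by
        rw [mul_comm (K + I) (ℓ ^ (1/p)), mul_assoc]
        refine mul_le_mul_of_nonneg_left ?_ hLp.le
        have h5 : K + I ≤ K + P ^ (1/p) * ℓ ^ (1/q) := by linarith
        refine h5.trans ?_
        nlinarith [mul_nonneg hD0 hLq.le, mul_nonneg hK0 hD0,
          mul_nonneg (mul_nonneg hK0 hD0) hLq.le]
end

section
/- Let G be a connected compact metric graph with exponents p̄ and nonlinearities γ_e as above. For i = 1, 2, let f^i = (f^i_e) with f^i_e ∈ L^1(0,ℓ_e), ω^i : V → ℝ, and let v^i be a weak solution of (P_{ω^i}^{f^i}). Then Σ_{e∈E} ∫₀^{ℓ_e} (v¹_e − v²_e)⁺ ≤ Σ_{e∈E} ∫₀^{ℓ_e} (f¹_e − f²_e)⁺ + Σ_{v∈V} (ω¹(v) − ω²(v))⁺. In particular, weak solutions of (P_ω^f) are unique up to a.e. equality on each edge. -/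
open MeasureTheory Set Filter

open Topology intervalIntegral
open scoped ENNReal NNReal


noncomputable section

lemma rho_nonneg {p r : ℝ} (hr : 0 ≤ r) : 0 ≤ rho p r :=
  mul_nonneg (Real.rpow_nonneg (abs_nonneg r) _) hr

lemma rho_neg (p r : ℝ) : rho p (-r) = - rho p r := by
  simp [rho, abs_neg, mul_neg]

lemma rho_nonpos {p r : ℝ} (hr : r ≤ 0) : rho p r ≤ 0 := by
  have := rho_nonneg (p := p) (r := -r) (by linarith)
  rw [rho_neg] at this; linarith

lemma rho_of_pos {p r : ℝ} (hr : 0 < r) : rho p r = r ^ (p - 1) := by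
  rw [rho, abs_of_pos hr]
  rw [← Real.rpow_add_one hr.ne' (p - 2)]
  ring_nf

lemma abs_rho {p : ℝ} (hp : 1 < p) (r : ℝ) : |rho p r| = |r| ^ (p - 1) := by
  rcases lt_trichotomy r 0 with h | h | h
  · rw [abs_of_nonpos (rho_nonpos h.le), ← rho_neg, rho_of_pos (by linarith), abs_of_neg h]
  · subst h
    simp [rho, Real.zero_rpow (by linarith : p - 1 ≠ 0)]
  · rw [abs_of_nonneg (rho_nonneg h.le), rho_of_pos h, abs_of_pos h]

lemma rho_mono {p : ℝ} (hp : 1 < p) : Monotone (rho p) := by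
  have key : ∀ a b : ℝ, 0 ≤ a → a ≤ b → rho p a ≤ rho p b := by
    intro a b ha hab
    rcases eq_or_lt_of_le ha with h | h
    · rw [← h]
      simpa [rho] using rho_nonneg (p := p) (by linarith : (0:ℝ) ≤ b)
    · rw [rho_of_pos h, rho_of_pos (lt_of_lt_of_le h hab)]
      exact Real.rpow_le_rpow h.le hab (by linarith)
  intro a b hab
  rcases le_total 0 a with h | h
  · exact key a b h hab
  · rcases le_total b 0 with h' | h'
    · have := key (-b) (-a) (by linarith) (by linarith)
      rw [rho_neg, rho_neg] at this; linarith
    · exact le_trans (rho_nonpos h) (rho_nonneg h')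

lemma rho_sub_mul_nonneg {p : ℝ} (hp : 1 < p) (a b : ℝ) :
    0 ≤ (rho p a - rho p b) * (a - b) := by
  rcases le_total b a with h | h
  · exact mul_nonneg (by linarith [rho_mono hp h]) (by linarith)
  · have h1 : rho p a - rho p b ≤ 0 := by linarith [rho_mono hp h]
    have h2 : a - b ≤ 0 := by linarith
    nlinarith

lemma young_max {p a b : ℝ} (hp : 1 < p) (ha : 0 ≤ a) (hb : 0 ≤ b) :
    a ^ (p - 1) * b ≤ a ^ p + b ^ p := by
  set M := max a b with hM
  have hMa : a ≤ M := le_max_left a b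
  have hMb : b ≤ M := le_max_right a b
  have hM0 : 0 ≤ M := le_trans ha hMa
  have h1 : a ^ (p - 1) * b ≤ M ^ (p - 1) * M :=
    mul_le_mul (Real.rpow_le_rpow ha hMa (by linarith)) hMb hb
      (Real.rpow_nonneg hM0 _)
  rcases eq_or_lt_of_le hM0 with h | h
  · have : M ^ (p - 1) * M = 0 := by rw [← h]; ring
    rw [this] at h1
    exact le_trans h1 (add_nonneg (Real.rpow_nonneg ha _) (Real.rpow_nonneg hb _))
  · have h2 : M ^ (p - 1) * M = M ^ p := by
      rw [← Real.rpow_add_one h.ne' (p - 1)]; norm_num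
    rw [h2] at h1
    refine le_trans h1 ?_
    rcases max_cases a b with ⟨h3, _⟩ | ⟨h3, _⟩ <;> rw [← hM] at * <;> rw [h3]
    · exact le_add_of_nonneg_right (Real.rpow_nonneg hb _)
    · exact le_add_of_nonneg_left (Real.rpow_nonneg ha _)
end


noncomputable section

lemma primitive_hasDerivAt {g : ℝ → ℝ} (hg : Continuous g) (a x : ℝ) :
    HasDerivAt (fun u => ∫ t in a..u, g t) (g x) x :=
  integral_hasDerivAt_right (hg.intervalIntegrable a x)
    (hg.stronglyMeasurableAtFilter _ _) hg.continuousAt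

lemma abs_intervalIntegral_le {f : ℝ → ℝ} (hf : Integrable f volume) (a b : ℝ) :
    |∫ t in a..b, f t| ≤ ∫ t, |f t| := by
  refine le_trans (intervalIntegral.norm_integral_le_integral_norm_uIoc (f := f) (μ := volume)) ?_
  refine setIntegral_le_integral hf.norm ?_
  exact Eventually.of_forall (fun x => norm_nonneg _)

/-- C¹-type chain rule for primitives of integrable functions. -/
lemma chain_rule_integral {F g h : ℝ → ℝ} (hF : ∀ y, HasDerivAt F (g y) y)
    (hgc : Continuous g) (hg1 : ∀ y, |g y| ≤ 1)
    (hh : Integrable h volume) (w0 x : ℝ) :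
    F (w0 + ∫ t in (0:ℝ)..x, h t)
      = F w0 + ∫ t in (0:ℝ)..x, g (w0 + ∫ s in (0:ℝ)..t, h s) * h t := by
  set w : ℝ → ℝ := fun t => w0 + ∫ s in (0:ℝ)..t, h s with hw
  have hFc : Continuous F := continuous_iff_continuousAt.2 fun y => (hF y).continuousAt
  -- approximation by continuous functions
  have happ : ∀ k : ℕ, ∃ G : ℝ → ℝ, Continuous G ∧ Integrable G volume ∧
      (∫ t, ‖h t - G t‖) ≤ 1 / (k + 1) := by
    intro k
    obtain ⟨G, _, hle, hGc, hGi⟩ :=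
      hh.exists_hasCompactSupport_integral_sub_le (ε := 1 / (k + 1)) (by positivity)
    exact ⟨G, hGc, hGi, hle⟩
  choose G hGc hGi hGle using happ
  set W : ℕ → ℝ → ℝ := fun k t => w0 + ∫ s in (0:ℝ)..t, G k s with hW
  have hWd : ∀ k t, HasDerivAt (W k) (G k t) t := fun k t =>
    (primitive_hasDerivAt (hGc k) 0 t).const_add w0
  have hWc : ∀ k, Continuous (W k) := fun k =>
    continuous_iff_continuousAt.2 fun t => (hWd k t).continuousAt
  -- per-k identity
  have key : ∀ k : ℕ, F (W k x) = F w0 + ∫ t in (0:ℝ)..x, g (W k t) * G k t := by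
    intro k
    have hcomp : ∀ t, HasDerivAt (fun s => F (W k s)) (g (W k t) * G k t) t := fun t =>
      (hF (W k t)).comp t (hWd k t)
    have hcont : Continuous fun t => g (W k t) * G k t :=
      (hgc.comp (hWc k)).mul (hGc k)
    have := integral_eq_sub_of_hasDerivAt (fun t _ => hcomp t)
      (hcont.intervalIntegrable 0 x)
    have hW0 : W k 0 = w0 := by simp [hW]
    rw [hW0] at this
    linarith [this]
  -- uniform closeness of W k to w
  have hWclose : ∀ k t, |W k t - w t| ≤ 1 / (k + 1) := by
    intro k t
    have h1 : W k t - w t = ∫ s in (0:ℝ)..t, (G k s - h s) := by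
      rw [intervalIntegral.integral_sub ((hGi k).intervalIntegrable)
        (hh.intervalIntegrable)]
      simp [hW, hw]
    rw [h1]
    refine le_trans (abs_intervalIntegral_le ((hGi k).sub hh) 0 t) ?_
    calc (∫ s, |G k s - h s|) = ∫ s, ‖h s - G k s‖ := by
          congr 1; funext s; rw [Real.norm_eq_abs, abs_sub_comm]
      _ ≤ 1 / (k + 1) := hGle k
  have hWtend : ∀ t, Tendsto (fun k => W k t) atTop (𝓝 (w t)) := by
    intro t
    rw [tendsto_iff_dist_tendsto_zero]
    refine squeeze_zero (fun k => dist_nonneg) (fun k => ?_)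
      tendsto_one_div_add_atTop_nhds_zero_nat
    rw [Real.dist_eq]; exact hWclose k t
  -- convergence of LHS
  have hL : Tendsto (fun k => F (W k x)) atTop (𝓝 (F (w x))) :=
    (hFc.continuousAt.tendsto).comp (hWtend x)
  -- convergence of RHS
  have hsplit : ∀ k : ℕ, (∫ t in (0:ℝ)..x, g (W k t) * G k t)
      = (∫ t in (0:ℝ)..x, g (W k t) * (G k t - h t)) + ∫ t in (0:ℝ)..x, g (W k t) * h t := by
    intro k
    rw [← intervalIntegral.integral_add]
    · congr 1; funext t; ring
    · exact (((hGi k).sub hh).bdd_mul ((hgc.comp (hWc k)).aestronglyMeasurable)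
        (Eventually.of_forall fun y => (Real.norm_eq_abs _).le.trans (hg1 _))).intervalIntegrable
    · exact ((hh.bdd_mul ((hgc.comp (hWc k)).aestronglyMeasurable)
        (Eventually.of_forall fun y => (Real.norm_eq_abs _).le.trans (hg1 _)))).intervalIntegrable
  have hterm1 : Tendsto (fun k => ∫ t in (0:ℝ)..x, g (W k t) * (G k t - h t)) atTop (𝓝 0) := by
    refine squeeze_zero_norm (fun k => ?_) tendsto_one_div_add_atTop_nhds_zero_nat
    have hi : Integrable (fun t => g (W k t) * (G k t - h t)) volume :=
      ((hGi k).sub hh).bdd_mul ((hgc.comp (hWc k)).aestronglyMeasurable) (Eventually.of_forall fun y => (Real.norm_eq_abs _).le.trans (hg1 _))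
    refine le_trans (abs_intervalIntegral_le hi 0 x) ?_
    calc (∫ t, |g (W k t) * (G k t - h t)|) ≤ ∫ t, |G k t - h t| := by
          refine integral_mono hi.abs ((hGi k).sub hh).abs (fun t => ?_)
          rw [abs_mul]
          exact mul_le_of_le_one_left (abs_nonneg _) (hg1 _)
      _ = ∫ t, ‖h t - G k t‖ := by
          congr 1; funext s; rw [Real.norm_eq_abs, abs_sub_comm]
      _ ≤ 1 / (k + 1) := hGle k
  have hterm2 : Tendsto (fun k => ∫ t in (0:ℝ)..x, g (W k t) * h t) atTop
      (𝓝 (∫ t in (0:ℝ)..x, g (w t) * h t)) := by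
    refine intervalIntegral.tendsto_integral_filter_of_dominated_convergence
      (fun t => |h t|) ?_ ?_ ?_ ?_
    · exact Eventually.of_forall fun k =>
        ((hgc.comp (hWc k)).aestronglyMeasurable).mul hh.aestronglyMeasurable.restrict
    · refine Eventually.of_forall fun k => Eventually.of_forall fun t _ => ?_
      rw [Real.norm_eq_abs, abs_mul]
      exact mul_le_of_le_one_left (abs_nonneg _) (hg1 _)
    · exact hh.abs.intervalIntegrable
    · refine Eventually.of_forall fun t _ => ?_
      exact ((hgc.continuousAt.tendsto).comp (hWtend t)).mul tendsto_const_nhds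
  have hR : Tendsto (fun k => F w0 + ∫ t in (0:ℝ)..x, g (W k t) * G k t) atTop
      (𝓝 (F w0 + ∫ t in (0:ℝ)..x, g (w t) * h t)) := by
    refine tendsto_const_nhds.add ?_
    have := hterm1.add hterm2
    rw [zero_add] at this
    convert this using 1
    funext k; exact hsplit k
  exact tendsto_nhds_unique (hL.congr key) hR

end

noncomputable section
/-- Piecewise-linear mollified indicator of `(c,d)`. -/
def mollg (c d : ℝ) (n : ℕ) (t : ℝ) : ℝ :=
  min 1 (max 0 ((n + 1 : ℝ) * (t - c))) * min 1 (max 0 ((n + 1 : ℝ) * (d - t)))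

lemma mollg_continuous (c d : ℝ) (n : ℕ) : Continuous (mollg c d n) := by
  unfold mollg; fun_prop

lemma mollg_nonneg (c d : ℝ) (n : ℕ) (t : ℝ) : 0 ≤ mollg c d n t :=
  mul_nonneg (le_min zero_le_one (le_max_left _ _)) (le_min zero_le_one (le_max_left _ _))

lemma mollg_le_one (c d : ℝ) (n : ℕ) (t : ℝ) : mollg c d n t ≤ 1 := by
  exact mul_le_one₀ (min_le_left _ _) (le_min zero_le_one (le_max_left _ _)) (min_le_left _ _)

lemma mollg_abs_le_one (c d : ℝ) (n : ℕ) (t : ℝ) : |mollg c d n t| ≤ 1 := by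
  rw [abs_of_nonneg (mollg_nonneg c d n t)]; exact mollg_le_one c d n t

lemma mollg_of_le_left {c d t : ℝ} (h : t ≤ c) (n : ℕ) : mollg c d n t = 0 := by
  have : max 0 ((n + 1 : ℝ) * (t - c)) = 0 := max_eq_left (by nlinarith)
  rw [mollg, this]; simp

lemma mollg_of_ge_right {c d t : ℝ} (h : d ≤ t) (n : ℕ) : mollg c d n t = 0 := by
  have : max 0 ((n + 1 : ℝ) * (d - t)) = 0 := max_eq_left (by nlinarith)
  rw [mollg, this]; simp

lemma mollg_eventually_one {c d t : ℝ} (h1 : c < t) (h2 : t < d) :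
    ∀ᶠ n : ℕ in atTop, mollg c d n t = 1 := by
  have hb : Tendsto (fun n : ℕ => ((n : ℝ) + 1)) atTop atTop :=
    tendsto_atTop_add_const_right atTop 1 tendsto_natCast_atTop_atTop
  have ht1 : Tendsto (fun n : ℕ => ((n : ℝ) + 1) * (t - c)) atTop atTop :=
    hb.atTop_mul_const (show (0:ℝ) < t - c by linarith)
  have ht2 : Tendsto (fun n : ℕ => ((n : ℝ) + 1) * (d - t)) atTop atTop :=
    hb.atTop_mul_const (show (0:ℝ) < d - t by linarith)
  filter_upwards [ht1.eventually_ge_atTop 1, ht2.eventually_ge_atTop 1] with n hn1 hn2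
  rw [mollg, max_eq_right (by linarith), max_eq_right (by linarith),
    min_eq_left hn1, min_eq_left hn2, one_mul]

lemma mollg_tendsto {c d t : ℝ} (hc : t ≠ c) (hd : t ≠ d) :
    Tendsto (fun n : ℕ => mollg c d n t) atTop
      (𝓝 ((Ioo c d).indicator (fun _ => (1:ℝ)) t)) := by
  by_cases h : t ∈ Ioo c d
  · rw [indicator_of_mem h]
    exact Tendsto.congr' (by filter_upwards [mollg_eventually_one h.1 h.2] with n hn
      using hn.symm) tendsto_const_nhds
  · rw [indicator_of_notMem h]
    rw [mem_Ioo, not_and_or] at h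
    rcases h with h | h
    · have : t ≤ c := by push_neg at h; exact h
      exact Tendsto.congr (fun n => (mollg_of_le_left this n).symm) tendsto_const_nhds
    · have : d ≤ t := by push_neg at h; exact h
      exact Tendsto.congr (fun n => (mollg_of_ge_right this n).symm) tendsto_const_nhds

/-- Integral of the indicator of `Ioo c d` from `c` to `y` is the truncation. -/
lemma integral_indicator_Ioo (c d y : ℝ) (hcd : c < d) :
    (∫ t in c..y, (Ioo c d).indicator (fun _ => (1:ℝ)) t) = min (max y c) d - c := by
  rcases le_or_gt y c with h | h
  · rw [max_eq_right h, min_eq_left hcd.le, sub_self]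
    have : EqOn ((Ioo c d).indicator (fun _ => (1:ℝ))) 0 (uIcc c y) := by
      intro t ht
      rw [uIcc_of_ge h] at ht
      exact indicator_of_notMem (fun hmem => absurd hmem.1 (not_lt.2 ht.2)) _
    rw [intervalIntegral.integral_congr this]; simp
  · rw [intervalIntegral.integral_of_le h.le, MeasureTheory.integral_indicator measurableSet_Ioo,
      Measure.restrict_restrict measurableSet_Ioo, setIntegral_const, smul_eq_mul, mul_one,
      max_eq_left h.le]
    rcases le_or_gt d y with h2 | h2
    · have hset : Ioo c d ∩ Ioc c y = Ioo c d :=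
        inter_eq_left.2 fun t ht => ⟨ht.1, le_trans ht.2.le h2⟩
      rw [hset, measureReal_def, Real.volume_Ioo, min_eq_right h2, ENNReal.toReal_ofReal (by linarith)]
    · have hset : Ioo c d ∩ Ioc c y = Ioc c y :=
        inter_eq_right.2 fun t ht => ⟨ht.1, lt_of_le_of_lt ht.2 h2⟩
      rw [hset, measureReal_def, Real.volume_Ioc, min_eq_left h2.le, ENNReal.toReal_ofReal (by linarith)]

lemma tendsto_mollg_primitive (c d : ℝ) (hcd : c < d) (y : ℝ) :
    Tendsto (fun n : ℕ => ∫ t in c..y, mollg c d n t) atTop (𝓝 (min (max y c) d - c)) := by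
  rw [← integral_indicator_Ioo c d y hcd]
  refine intervalIntegral.tendsto_integral_filter_of_dominated_convergence
    (fun _ => (1:ℝ)) ?_ ?_ ?_ ?_
  · exact Eventually.of_forall fun n => (mollg_continuous c d n).aestronglyMeasurable
  · exact Eventually.of_forall fun n => Eventually.of_forall fun t _ => by
      rw [Real.norm_eq_abs]; exact mollg_abs_le_one c d n t
  · exact intervalIntegrable_const
  · have hae : ∀ᵐ t : ℝ ∂volume, t ≠ c ∧ t ≠ d := by
      have h1 : ∀ᵐ t : ℝ ∂volume, t ≠ c := by
        simpa [ae_iff] using Real.volume_singleton (a := c)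
      have h2 : ∀ᵐ t : ℝ ∂volume, t ≠ d := by
        simpa [ae_iff] using Real.volume_singleton (a := d)
      exact h1.and h2
    filter_upwards [hae] with t ⟨htc, htd⟩ _
    exact mollg_tendsto htc htd

/-- Chain rule for two-sided truncation at good levels. -/
lemma clamp_chain {c d : ℝ} (hcd : c < d) {h : ℝ → ℝ} (hh : Integrable h volume) (w0 : ℝ)
    (hc : ∀ᵐ t : ℝ ∂volume, w0 + (∫ s in (0:ℝ)..t, h s) = c → h t = 0)
    (hd : ∀ᵐ t : ℝ ∂volume, w0 + (∫ s in (0:ℝ)..t, h s) = d → h t = 0) (x : ℝ) :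
    min (max (w0 + ∫ t in (0:ℝ)..x, h t) c) d
      = min (max w0 c) d + ∫ t in (0:ℝ)..x,
          ((fun y => w0 + ∫ s in (0:ℝ)..y, h s) ⁻¹' (Ioo c d)).indicator h t := by
  set w : ℝ → ℝ := fun y => w0 + ∫ s in (0:ℝ)..y, h s with hw
  have hwc : Continuous w := continuous_const.add (hh.continuous_primitive 0)
  -- apply chain_rule_integral with F n := primitive of mollg from c
  have key : ∀ n : ℕ, (∫ t in c..(w x), mollg c d n t)
      = (∫ t in c..w0, mollg c d n t) + ∫ t in (0:ℝ)..x, mollg c d n (w t) * h t := by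
    intro n
    exact chain_rule_integral (fun y => primitive_hasDerivAt (mollg_continuous c d n) c y)
      (mollg_continuous c d n) (mollg_abs_le_one c d n) hh w0 x
  have hL : Tendsto (fun n : ℕ => ∫ t in c..(w x), mollg c d n t) atTop
      (𝓝 (min (max (w x) c) d - c)) := tendsto_mollg_primitive c d hcd (w x)
  have hR1 : Tendsto (fun n : ℕ => ∫ t in c..w0, mollg c d n t) atTop
      (𝓝 (min (max w0 c) d - c)) := tendsto_mollg_primitive c d hcd w0
  have hR2 : Tendsto (fun n : ℕ => ∫ t in (0:ℝ)..x, mollg c d n (w t) * h t) atTop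
      (𝓝 (∫ t in (0:ℝ)..x, (w ⁻¹' (Ioo c d)).indicator h t)) := by
    refine intervalIntegral.tendsto_integral_filter_of_dominated_convergence
      (fun t => |h t|) ?_ ?_ ?_ ?_
    · exact Eventually.of_forall fun n =>
        (((mollg_continuous c d n).comp hwc).aestronglyMeasurable).mul
          hh.aestronglyMeasurable.restrict
    · exact Eventually.of_forall fun n => Eventually.of_forall fun t _ => by
        rw [Real.norm_eq_abs, abs_mul]
        exact mul_le_of_le_one_left (abs_nonneg _) (mollg_abs_le_one c d n _)
    · exact hh.abs.intervalIntegrable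
    · filter_upwards [hc, hd] with t htc htd _
      by_cases hz : h t = 0
      · rw [hz]
        simp only [mul_zero]
        have : (w ⁻¹' (Ioo c d)).indicator h t = 0 := by
          by_cases hmem : t ∈ w ⁻¹' (Ioo c d)
          · rw [indicator_of_mem hmem, hz]
          · rw [indicator_of_notMem hmem]
        rw [this]; exact tendsto_const_nhds
      · have hwtc : w t ≠ c := fun hq => hz (htc hq)
        have hwtd : w t ≠ d := fun hq => hz (htd hq)
        have := (mollg_tendsto hwtc hwtd).mul_const (h t)
        by_cases hmem : w t ∈ Ioo c d
        · rw [indicator_of_mem hmem] at this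
          rw [indicator_of_mem (by exact hmem : t ∈ w ⁻¹' (Ioo c d))]
          simpa using this
        · rw [indicator_of_notMem hmem] at this
          rw [indicator_of_notMem (by exact hmem : t ∉ w ⁻¹' (Ioo c d))]
          simpa using this
  have := tendsto_nhds_unique (hL.congr key) (hR1.add hR2)
  linarith [this]
end

noncomputable section
/-- The set of bad levels (where the derivative does not vanish a.e. on the level set)
is countable. -/
lemma countable_bad_levels {D : ℝ → ℝ} (hD : Integrable D volume) {w : ℝ → ℝ}
    (hw : Continuous w) :
    {c : ℝ | ¬ ∀ᵐ t : ℝ ∂volume, w t = c → D t = 0}.Countable := by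
  obtain ⟨g, hgm, hgae⟩ := hD.aestronglyMeasurable
  have hgmeas : Measurable g := hgm.measurable
  set μ : Measure ℝ := volume.withDensity (fun t => (‖g t‖₊ : ℝ≥0∞)) with hμ
  have hfin : IsFiniteMeasure μ := by
    constructor
    rw [hμ, withDensity_apply _ MeasurableSet.univ, Measure.restrict_univ]
    have h1 : ∫⁻ t, (‖g t‖₊ : ℝ≥0∞) ∂volume = ∫⁻ t, (‖D t‖₊ : ℝ≥0∞) ∂volume := by
      refine lintegral_congr_ae ?_
      filter_upwards [hgae] with t ht using by rw [ht]
    rw [h1]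
    exact hD.2
  have hcount : {c : ℝ | 0 < μ {t | w t = c}}.Countable := by
    refine Measure.countable_meas_pos_of_disjoint_iUnion (μ := μ)
      (As := fun c => {t | w t = c}) (fun c => ?_) (fun c c' hcc => ?_)
    · exact (hw.measurable (measurableSet_singleton c) : MeasurableSet (w ⁻¹' {c}))
    · simp only [Function.onFun]
      refine Set.disjoint_left.2 fun t ht ht' => hcc ?_
      rw [← ht, ← ht']
  refine hcount.mono fun c hc => ?_
  simp only [mem_setOf_eq] at hc ⊢
  by_contra h0
  apply hc
  have hmeas : MeasurableSet {t : ℝ | w t = c} :=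
    (hw.measurable (measurableSet_singleton c) : MeasurableSet (w ⁻¹' {c}))
  have hc' : μ {t : ℝ | w t = c} = 0 := by
    simpa [not_lt, nonpos_iff_eq_zero] using h0
  rw [hμ, withDensity_apply _ hmeas] at hc'
  have hzero : ∀ᵐ t ∂(volume.restrict {t : ℝ | w t = c}), (‖g t‖₊ : ℝ≥0∞) = 0 :=
    (lintegral_eq_zero_iff (hgmeas.nnnorm.coe_nnreal_ennreal)).1 hc'
  rw [ae_restrict_iff' hmeas] at hzero
  filter_upwards [hzero, hgae] with t h1 h2 h3
  have : (‖g t‖₊ : ℝ≥0∞) = 0 := h1 h3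
  simp only [ENNReal.coe_eq_zero, nnnorm_eq_zero] at this
  rw [h2, this]
end



section MoreHelpers
open Topology intervalIntegral

lemma rho_continuous {q : ℝ} (hq : 1 < q) : Continuous (rho q) := by
  rw [continuous_iff_continuousAt]
  intro r
  rcases eq_or_ne r 0 with hr | hr
  · subst hr
    have h0 : rho q 0 = 0 := by
      simp [rho]
    unfold ContinuousAt
    rw [h0]
    refine squeeze_zero_norm
      (fun x => le_of_eq (by rw [Real.norm_eq_abs, abs_rho hq] :
        ‖rho q x‖ = |x| ^ (q - 1))) ?_
    have hcont : Continuous (fun x : ℝ => |x| ^ (q - 1)) :=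
        (Real.continuous_rpow_const (by linarith)).comp continuous_abs
    have h2 := hcont.continuousAt (x := 0)
    unfold ContinuousAt at h2
    simpa [Real.zero_rpow (by linarith : q - 1 ≠ 0)] using h2
  · exact ((Real.continuousAt_rpow_const _ _ (Or.inl (abs_ne_zero.2 hr))).comp
      continuous_abs.continuousAt).mul continuousAt_id

lemma clamp01_bounds {c d y : ℝ} (hcd : c < d) :
    0 ≤ (min (max y c) d - c) / (d - c) ∧ (min (max y c) d - c) / (d - c) ≤ 1 := by
  have h1 : c ≤ min (max y c) d := le_min (le_max_right _ _) hcd.le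
  have h2 : min (max y c) d ≤ d := min_le_right _ _
  constructor
  · exact div_nonneg (by linarith) (by linarith)
  · rw [div_le_one (by linarith)]; linarith

lemma mul_clamp_le_posPart {a φ : ℝ} (h0 : 0 ≤ φ) (h1 : φ ≤ 1) : a * φ ≤ max a 0 := by
  rcases le_total 0 a with h | h
  · calc a * φ ≤ a * 1 := by nlinarith
      _ = a := mul_one a
      _ ≤ max a 0 := le_max_left _ _
  · calc a * φ ≤ 0 := mul_nonpos_of_nonpos_of_nonneg h h0
      _ ≤ max a 0 := le_max_right _ _

lemma intervalIntegrable_of_integrableOn_Ioo {ℓ : ℝ} {f : ℝ → ℝ}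
    (hf : IntegrableOn f (Ioo 0 ℓ) volume) {x : ℝ} (hx : x ∈ Icc (0:ℝ) ℓ) :
    IntervalIntegrable f volume 0 x := by
  rw [intervalIntegrable_iff_integrableOn_Ioc_of_le hx.1]
  refine hf.mono_set_ae ?_
  have hne : ∀ᵐ t : ℝ ∂volume, t ≠ ℓ := by
    simpa [ae_iff] using Real.volume_singleton (a := ℓ)
  filter_upwards [hne] with t htne ht
  exact ⟨ht.1, lt_of_le_of_ne (le_trans ht.2 hx.2) htne⟩

lemma exists_notin_countable {a b : ℝ} (hab : a < b) {S : Set ℝ} (hS : S.Countable) :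
    ∃ x : ℝ, x ∈ Ioo a b ∧ x ∉ S := by
  by_contra h
  push_neg at h
  have hsub : Ioo a b ⊆ S := fun x hx => h x hx
  have h1 : volume (Ioo a b) ≤ volume S := measure_mono hsub
  rw [hS.measure_zero, Real.volume_Ioo] at h1
  have h2 : (0:ℝ≥0∞) < ENNReal.ofReal (b - a) := ENNReal.ofReal_pos.2 (by linarith)
  exact absurd (le_antisymm h1 zero_le) (ne_of_gt h2)

lemma rpow_sum_bound {q K z a b : ℝ} (hq : 1 < q) (hK : 0 < K) (hz : |z| ≤ |a| + |b|) :
    (|z| / K) ^ q ≤ (2 / K) ^ q * (|a| ^ q + |b| ^ q) := by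
  set M := max |a| |b| with hM
  have hM0 : 0 ≤ M := le_trans (abs_nonneg a) (le_max_left _ _)
  have h1 : |z| / K ≤ (2 / K) * M := by
    have hab : |a| + |b| ≤ 2 * M := by
      have := le_max_left |a| |b|
      have := le_max_right |a| |b|
      rw [← hM] at *
      linarith
    rw [div_mul_eq_mul_div]
    exact (div_le_div_iff_of_pos_right hK).2 (by linarith)
  have h2 : (|z| / K) ^ q ≤ ((2 / K) * M) ^ q :=
    Real.rpow_le_rpow (div_nonneg (abs_nonneg z) hK.le) h1 (by linarith)
  have h3 : ((2 / K) * M) ^ q = (2 / K) ^ q * M ^ q :=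
    Real.mul_rpow (by positivity) hM0
  have h4 : M ^ q ≤ |a| ^ q + |b| ^ q := by
    rcases max_cases |a| |b| with ⟨hMa, _⟩ | ⟨hMa, _⟩ <;> rw [← hM] at hMa <;> rw [hMa]
    · exact le_add_of_nonneg_right (Real.rpow_nonneg (abs_nonneg b) _)
    · exact le_add_of_nonneg_left (Real.rpow_nonneg (abs_nonneg a) _)
  calc (|z| / K) ^ q ≤ (2 / K) ^ q * M ^ q := h3 ▸ h2
    _ ≤ (2 / K) ^ q * (|a| ^ q + |b| ^ q) :=
        mul_le_mul_of_nonneg_left h4 (Real.rpow_nonneg (by positivity) _)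

lemma abs_sub_le_add_abs (a b : ℝ) : |a - b| ≤ |a| + |b| := by
  calc |a - b| = |a + (-b)| := by ring_nf
    _ ≤ |a| + |-b| := abs_add_le _ _
    _ = |a| + |b| := by rw [abs_neg]

end MoreHelpers



section KeyLemma
open Topology intervalIntegral

theorem graph_key (G : MetricGraph) (p : G.E → ℝ) (hp : ∀ e, 1 < p e)
    (γ : G.E → ℝ → ℝ)
    (hγ : ∀ e, Continuous (γ e) ∧ StrictMono (γ e) ∧ Function.Surjective (γ e) ∧ γ e 0 = 0)
    (f₁ f₂ : G.E → ℝ → ℝ)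
    (hf₁ : ∀ e, IntegrableOn (f₁ e) (Ioo 0 (G.len e)) volume)
    (hf₂ : ∀ e, IntegrableOn (f₂ e) (Ioo 0 (G.len e)) volume)
    (ω₁ ω₂ : G.V → ℝ) (v₁ v₂ : G.E → ℝ → ℝ)
    (h₁ : IsGraphWeakSolution G p γ f₁ ω₁ v₁)
    (h₂ : IsGraphWeakSolution G p γ f₂ ω₂ v₂) :
    edgeSum G (fun e => ∫ x in Ioo (0:ℝ) (G.len e), max (v₁ e x - v₂ e x) 0)
      ≤ edgeSum G (fun e => ∫ x in Ioo (0:ℝ) (G.len e), max (f₁ e x - f₂ e x) 0)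
        + vertexSum G (fun w => max (ω₁ w - ω₂ w) 0) := by
  letI := G.fintypeE
  letI := G.fintypeV
  obtain ⟨U₁, U₁', uV₁, hv₁int, hSob₁, hγ₁, hweak₁⟩ := h₁
  obtain ⟨U₂, U₂', uV₂, hv₂int, hSob₂, hγ₂, hweak₂⟩ := h₂
  obtain ⟨hIS₁, hι₁, hτ₁⟩ := hSob₁
  obtain ⟨hIS₂, hι₂, hτ₂⟩ := hSob₂
  set D : G.E → ℝ → ℝ :=
    fun e => (Ioo 0 (G.len e)).indicator (fun t => U₁' e t - U₂' e t) with hD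
  have hDint : ∀ e, Integrable (D e) volume := fun e =>
    (integrable_indicator_iff measurableSet_Ioo).2 ((hIS₁ e).1.sub (hIS₂ e).1)
  set W : G.E → ℝ → ℝ :=
    fun e t => (U₁ e 0 - U₂ e 0) + ∫ s in (0:ℝ)..t, D e s with hWdef
  have hWc : ∀ e, Continuous (W e) := fun e =>
    continuous_const.add ((hDint e).continuous_primitive 0)
  have hW0 : ∀ e, W e 0 = U₁ e 0 - U₂ e 0 := fun e => by
    rw [hWdef]; simp
  have hUIcc : ∀ e, ∀ x ∈ Icc (0:ℝ) (G.len e), W e x = U₁ e x - U₂ e x := by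
    intro e x hx
    have h1 := (hIS₁ e).2.2 x hx
    have h2 := (hIS₂ e).2.2 x hx
    have hsub : (∫ t in (0:ℝ)..x, U₁' e t) - (∫ t in (0:ℝ)..x, U₂' e t)
        = ∫ t in (0:ℝ)..x, (U₁' e t - U₂' e t) :=
      (intervalIntegral.integral_sub
        (intervalIntegrable_of_integrableOn_Ioo (hIS₁ e).1 hx)
        (intervalIntegrable_of_integrableOn_Ioo (hIS₂ e).1 hx)).symm
    have hcongr : (∫ t in (0:ℝ)..x, (U₁' e t - U₂' e t)) = ∫ t in (0:ℝ)..x, D e t := by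
      refine intervalIntegral.integral_congr_ae ?_
      have hne : ∀ᵐ t : ℝ ∂volume, t ≠ G.len e := by
        simpa [ae_iff] using Real.volume_singleton (a := G.len e)
      filter_upwards [hne] with t htne ht
      rw [uIoc_of_le hx.1] at ht
      have hmem : t ∈ Ioo 0 (G.len e) := ⟨ht.1, lt_of_le_of_ne (le_trans ht.2 hx.2) htne⟩
      rw [hD]
      dsimp only
      exact (indicator_of_mem hmem (fun t => U₁' e t - U₂' e t)).symm
    rw [hWdef]
    dsimp only
    rw [← hcongr, ← hsub, h1, h2]
    ring
  -- the countable set of bad truncation levels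
  set Bad : Set ℝ := ⋃ e, {c : ℝ | ¬ ∀ᵐ t : ℝ ∂volume, W e t = c → D e t = 0} with hBad
  have hBadc : Bad.Countable :=
    countable_iUnion fun e => countable_bad_levels (hDint e) (hWc e)
  -- the truncation test functions
  set Φ : ℝ → ℝ → G.E → ℝ → ℝ :=
    fun c d e x => (min (max (W e x) c) d - c) / (d - c) with hΦ
  set Φd : ℝ → ℝ → G.E → ℝ → ℝ :=
    fun c d e x => ((W e ⁻¹' (Ioo c d)).indicator (D e) x) / (d - c) with hΦd
  set ΦV : ℝ → ℝ → G.V → ℝ :=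
    fun c d w => (min (max (uV₁ w - uV₂ w) c) d - c) / (d - c) with hΦV
  have hΦ01 : ∀ c d : ℝ, c < d → ∀ e x, 0 ≤ Φ c d e x ∧ Φ c d e x ≤ 1 := by
    intro c d hcd e x
    rw [hΦ]
    exact clamp01_bounds hcd
  have hΦV01 : ∀ c d : ℝ, c < d → ∀ w, 0 ≤ ΦV c d w ∧ ΦV c d w ≤ 1 := by
    intro c d hcd w
    rw [hΦV]
    exact clamp01_bounds hcd
  have hΦcont : ∀ c d e, Continuous (Φ c d e) := by
    intro c d e
    rw [hΦ]
    exact ((((hWc e).max continuous_const).min continuous_const).sub continuous_const).div_const _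
  -- main inequality for a fixed pair of good levels
  have main : ∀ c d : ℝ, 0 < c → c < d → c ∉ Bad → d ∉ Bad →
      (∑ e, ∫ x in Ioo (0:ℝ) (G.len e), (v₁ e x - v₂ e x) * Φ c d e x)
        ≤ (∑ e, ∫ x in Ioo (0:ℝ) (G.len e), max (f₁ e x - f₂ e x) 0)
          + ∑ w, max (ω₁ w - ω₂ w) 0 := by
    intro c d hc0 hcd hcB hdB
    have hdc : (0:ℝ) < d - c := by linarith
    have hgoodc : ∀ e, ∀ᵐ t : ℝ ∂volume, W e t = c → D e t = 0 := by
      intro e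
      by_contra h
      exact hcB (hBad ▸ mem_iUnion.2 ⟨e, h⟩)
    have hgoodd : ∀ e, ∀ᵐ t : ℝ ∂volume, W e t = d → D e t = 0 := by
      intro e
      by_contra h
      exact hdB (hBad ▸ mem_iUnion.2 ⟨e, h⟩)
    -- fundamental theorem of calculus for the truncated test function
    have hFTC : ∀ e x, Φ c d e x = Φ c d e 0 + ∫ t in (0:ℝ)..x, Φd c d e t := by
      intro e x
      have hkey := clamp_chain hcd (hDint e) (U₁ e 0 - U₂ e 0)
        (by rw [hWdef] at hgoodc; exact hgoodc e)
        (by rw [hWdef] at hgoodd; exact hgoodd e) x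
      have hpre : (fun y => (U₁ e 0 - U₂ e 0) + ∫ s in (0:ℝ)..y, D e s) ⁻¹' (Ioo c d)
          = W e ⁻¹' (Ioo c d) := by rw [hWdef]
      rw [hpre] at hkey
      rw [hΦ, hΦd]
      dsimp only
      rw [intervalIntegral.integral_div, hW0 e]
      have hWx : W e x = (U₁ e 0 - U₂ e 0) + ∫ s in (0:ℝ)..x, D e s := by rw [hWdef]
      rw [hWx, hkey]
      ring
    -- integrability of the test derivative
    have hψint : ∀ e, Integrable (Φd c d e) volume := by
      intro e
      rw [hΦd]
      exact ((hDint e).indicator ((hWc e).measurable measurableSet_Ioo)).div_const _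
    have hΦdabs : ∀ e x, |Φd c d e x| ≤ |D e x| / (d - c) := by
      intro e x
      rw [hΦd]
      dsimp only
      rw [abs_div, abs_of_pos hdc]
      have hind : |(W e ⁻¹' (Ioo c d)).indicator (D e) x| ≤ |D e x| := by
        by_cases h : x ∈ W e ⁻¹' (Ioo c d)
        · rw [indicator_of_mem h]
        · rw [indicator_of_notMem h, abs_zero]
          exact abs_nonneg _
      exact (div_le_div_iff_of_pos_right hdc).2 hind
    have hDabs : ∀ e x, x ∈ Ioo (0:ℝ) (G.len e) → |D e x| ≤ |U₁' e x| + |U₂' e x| := by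
      intro e x hx
      rw [hD]
      dsimp only
      rw [indicator_of_mem hx]
      exact abs_sub_le_add_abs _ _
    -- Sobolev regularity of the test function
    have hGS : GraphSobolev G p (Φ c d) (Φd c d) (ΦV c d) := by
      refine ⟨fun e => ⟨?_, ?_, ?_⟩, fun e => ?_, fun e => ?_⟩
      · exact (hψint e).integrableOn
      · refine Integrable.mono'
          (g := fun x => (2 / (d - c)) ^ (p e) * (|U₁' e x| ^ (p e) + |U₂' e x| ^ (p e)))
          (((hIS₁ e).2.1.add (hIS₂ e).2.1).const_mul _) ?_ ?_
        · exact ((Real.continuous_rpow_const (by linarith [hp e])).comp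
            continuous_abs).comp_aestronglyMeasurable
              ((hψint e).aestronglyMeasurable.restrict)
        · filter_upwards [ae_restrict_mem measurableSet_Ioo] with x hx
          rw [Real.norm_eq_abs, abs_of_nonneg (Real.rpow_nonneg (abs_nonneg _) _)]
          have h1 : |Φd c d e x| ≤ |U₁' e x - U₂' e x| / (d - c) := by
            refine le_trans (hΦdabs e x) ?_
            have : |D e x| ≤ |U₁' e x - U₂' e x| := by
              rw [hD]
              dsimp only
              rw [indicator_of_mem hx]
            exact (div_le_div_iff_of_pos_right hdc).2 this
          have h2 : |Φd c d e x| ^ (p e) ≤ (|U₁' e x - U₂' e x| / (d - c)) ^ (p e) :=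
            Real.rpow_le_rpow (abs_nonneg _) h1 (by linarith [hp e])
          exact le_trans h2 (rpow_sum_bound (hp e) hdc (abs_sub_le_add_abs _ _))
      · intro x _
        exact hFTC e x
      · rw [hΦ, hΦV]
        dsimp only
        rw [hW0 e, hι₁ e, hι₂ e]
      · rw [hΦ, hΦV]
        dsimp only
        rw [hUIcc e (G.len e) ⟨(G.len_pos e).le, le_refl _⟩, hτ₁ e, hτ₂ e]
    -- plug the test function into both weak formulations
    have E₁ := hweak₁ (Φ c d) (Φd c d) (ΦV c d) hGS
    have E₂ := hweak₂ (Φ c d) (Φd c d) (ΦV c d) hGS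
    simp only [edgeSum, vertexSum] at E₁ E₂
    -- integrability of products with bounded continuous factor
    have hvmul : ∀ (e : G.E) (v : ℝ → ℝ), IntegrableOn v (Ioo 0 (G.len e)) volume →
        IntegrableOn (fun x => v x * Φ c d e x) (Ioo 0 (G.len e)) volume := by
      intro e v hv
      have hb := hv.bdd_mul (c := 1) ((hΦcont c d e).aestronglyMeasurable.restrict)
        (Eventually.of_forall fun x => by
          rw [Real.norm_eq_abs, abs_of_nonneg (hΦ01 c d hcd e x).1]
          exact (hΦ01 c d hcd e x).2)
      exact hb.congr (Eventually.of_forall fun x => mul_comm _ _)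
    -- monotonicity term: nonnegativity
    have hρint : ∀ (e : G.E) (U' : ℝ → ℝ), IntegrableOn U' (Ioo 0 (G.len e)) volume →
        IntegrableOn (fun x => |U' x| ^ (p e)) (Ioo 0 (G.len e)) volume →
        IntegrableOn (fun x => rho (p e) (U' x) * Φd c d e x) (Ioo 0 (G.len e)) volume := by
      intro e U' hU hUp
      refine Integrable.mono'
        (g := fun x => (1 / (d - c)) *
          ((|U' x| ^ (p e) + |U₁' e x| ^ (p e)) + (|U' x| ^ (p e) + |U₂' e x| ^ (p e))))
        (((hUp.add (hIS₁ e).2.1).add (hUp.add (hIS₂ e).2.1)).const_mul _) ?_ ?_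
      · exact ((rho_continuous (hp e)).comp_aestronglyMeasurable
          hU.aestronglyMeasurable).mul ((hψint e).aestronglyMeasurable.restrict)
      · filter_upwards [ae_restrict_mem measurableSet_Ioo] with x hx
        rw [Real.norm_eq_abs, abs_mul, abs_rho (hp e)]
        have h1 : |Φd c d e x| ≤ (|U₁' e x| + |U₂' e x|) / (d - c) :=
          le_trans (hΦdabs e x) ((div_le_div_iff_of_pos_right hdc).2 (hDabs e x hx))
        have hy1 := young_max (hp e) (abs_nonneg (U' x)) (abs_nonneg (U₁' e x))
        have hy2 := young_max (hp e) (abs_nonneg (U' x)) (abs_nonneg (U₂' e x))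
        calc |U' x| ^ (p e - 1) * |Φd c d e x|
            ≤ |U' x| ^ (p e - 1) * ((|U₁' e x| + |U₂' e x|) / (d - c)) :=
              mul_le_mul_of_nonneg_left h1 (Real.rpow_nonneg (abs_nonneg _) _)
          _ = (1 / (d - c)) * (|U' x| ^ (p e - 1) * |U₁' e x|
                + |U' x| ^ (p e - 1) * |U₂' e x|) := by ring
          _ ≤ (1 / (d - c)) * ((|U' x| ^ (p e) + |U₁' e x| ^ (p e))
                + (|U' x| ^ (p e) + |U₂' e x| ^ (p e))) := by
              have hpos : (0:ℝ) ≤ 1 / (d - c) := by positivity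
              exact mul_le_mul_of_nonneg_left (add_le_add hy1 hy2) hpos
    have hρ0 : ∀ e, 0 ≤ (∫ x in Ioo (0:ℝ) (G.len e), rho (p e) (U₁' e x) * Φd c d e x)
        - ∫ x in Ioo (0:ℝ) (G.len e), rho (p e) (U₂' e x) * Φd c d e x := by
      intro e
      rw [sub_nonneg, ← sub_nonneg (b := _), ← integral_sub
        (hρint e _ (hIS₁ e).1 (hIS₁ e).2.1) (hρint e _ (hIS₂ e).1 (hIS₂ e).2.1)]
      refine integral_nonneg fun x => ?_
      dsimp only
      have hfact : rho (p e) (U₁' e x) * Φd c d e x - rho (p e) (U₂' e x) * Φd c d e x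
          = (rho (p e) (U₁' e x) - rho (p e) (U₂' e x)) * Φd c d e x := by ring
      rw [hfact, hΦd]
      dsimp only
      by_cases hmem : x ∈ W e ⁻¹' (Ioo c d)
      · rw [indicator_of_mem hmem, hD]
        dsimp only
        by_cases hx : x ∈ Ioo (0:ℝ) (G.len e)
        · rw [indicator_of_mem hx, mul_div_assoc']
          exact div_nonneg (rho_sub_mul_nonneg (hp e) _ _) hdc.le
        · rw [indicator_of_notMem hx]
          simp
      · rw [indicator_of_notMem hmem]
        simp
    have hρsum : 0 ≤ (∑ e, ∫ x in Ioo (0:ℝ) (G.len e), rho (p e) (U₁' e x) * Φd c d e x)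
        - ∑ e, ∫ x in Ioo (0:ℝ) (G.len e), rho (p e) (U₂' e x) * Φd c d e x := by
      rw [← Finset.sum_sub_distrib]
      exact Finset.sum_nonneg fun e _ => hρ0 e
    -- rewrite the v-difference
    have hvdiff : (∑ e, ∫ x in Ioo (0:ℝ) (G.len e), (v₁ e x - v₂ e x) * Φ c d e x)
        = (∑ e, ∫ x in Ioo (0:ℝ) (G.len e), v₁ e x * Φ c d e x)
          - ∑ e, ∫ x in Ioo (0:ℝ) (G.len e), v₂ e x * Φ c d e x := by
      rw [← Finset.sum_sub_distrib]
      refine Finset.sum_congr rfl fun e _ => ?_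
      rw [← integral_sub (hvmul e _ (hv₁int e)) (hvmul e _ (hv₂int e))]
      simp only [sub_mul]
    -- f bound
    have hfdiff : (∑ e, ∫ x in Ioo (0:ℝ) (G.len e), f₁ e x * Φ c d e x)
        - (∑ e, ∫ x in Ioo (0:ℝ) (G.len e), f₂ e x * Φ c d e x)
        ≤ ∑ e, ∫ x in Ioo (0:ℝ) (G.len e), max (f₁ e x - f₂ e x) 0 := by
      rw [← Finset.sum_sub_distrib]
      refine Finset.sum_le_sum fun e _ => ?_
      rw [← integral_sub (hvmul e _ (hf₁ e)) (hvmul e _ (hf₂ e))]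
      refine integral_mono ((hvmul e _ (hf₁ e)).sub (hvmul e _ (hf₂ e)))
        ((hf₁ e).sub (hf₂ e)).pos_part fun x => ?_
      dsimp only
      have hb := mul_clamp_le_posPart (hΦ01 c d hcd e x).1 (hΦ01 c d hcd e x).2
        (a := f₁ e x - f₂ e x)
      nlinarith [hb]
    -- ω bound
    have hωdiff : (∑ w, ω₁ w * ΦV c d w) - (∑ w, ω₂ w * ΦV c d w)
        ≤ ∑ w, max (ω₁ w - ω₂ w) 0 := by
      rw [← Finset.sum_sub_distrib]
      refine Finset.sum_le_sum fun w _ => ?_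
      have hb := mul_clamp_le_posPart (hΦV01 c d hcd w).1 (hΦV01 c d hcd w).2
        (a := ω₁ w - ω₂ w)
      nlinarith [hb]
    rw [hvdiff]
    linarith [E₁, E₂, hρsum, hfdiff, hωdiff]
  -- choice of good level sequences tending to zero
  have hpickd : ∀ n : ℕ, ∃ dd : ℝ, dd ∈ Ioo (0:ℝ) (1 / (n + 1)) ∧ dd ∉ Bad := fun n =>
    exists_notin_countable (by positivity) hBadc
  choose ds hds1 hds2 using hpickd
  have hpickc : ∀ n : ℕ, ∃ cc : ℝ, cc ∈ Ioo (0:ℝ) (ds n) ∧ cc ∉ Bad := fun n =>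
    exists_notin_countable (hds1 n).1 hBadc
  choose cs hcs1 hcs2 using hpickc
  have hdlim : Tendsto ds atTop (𝓝 0) :=
    squeeze_zero (fun n => (hds1 n).1.le) (fun n => (hds1 n).2.le)
      tendsto_one_div_add_atTop_nhds_zero_nat
  have hbound : ∀ n : ℕ,
      (∑ e, ∫ x in Ioo (0:ℝ) (G.len e), (v₁ e x - v₂ e x) * Φ (cs n) (ds n) e x)
        ≤ (∑ e, ∫ x in Ioo (0:ℝ) (G.len e), max (f₁ e x - f₂ e x) 0)
          + ∑ w, max (ω₁ w - ω₂ w) 0 := fun n =>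
    main (cs n) (ds n) (hcs1 n).1 (hcs1 n).2 (hcs2 n) (hds2 n)
  have hlim : Tendsto
      (fun n => ∑ e, ∫ x in Ioo (0:ℝ) (G.len e), (v₁ e x - v₂ e x) * Φ (cs n) (ds n) e x)
      atTop (𝓝 (∑ e, ∫ x in Ioo (0:ℝ) (G.len e), max (v₁ e x - v₂ e x) 0)) := by
    refine tendsto_finset_sum _ fun e _ => ?_
    refine MeasureTheory.tendsto_integral_of_dominated_convergence
      (fun x => |v₁ e x - v₂ e x|) ?_ ?_ ?_ ?_
    · exact fun n => ((hv₁int e).sub (hv₂int e)).aestronglyMeasurable.mul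
        ((hΦcont (cs n) (ds n) e).aestronglyMeasurable.restrict)
    · exact ((hv₁int e).sub (hv₂int e)).abs
    · intro n
      refine Eventually.of_forall fun x => ?_
      rw [Real.norm_eq_abs, abs_mul]
      have h01 := hΦ01 (cs n) (ds n) (hcs1 n).2 e x
      calc |v₁ e x - v₂ e x| * |Φ (cs n) (ds n) e x|
          ≤ |v₁ e x - v₂ e x| * 1 := by
            refine mul_le_mul_of_nonneg_left ?_ (abs_nonneg _)
            rw [abs_of_nonneg h01.1]
            exact h01.2
        _ = |v₁ e x - v₂ e x| := mul_one _
    · filter_upwards [hγ₁ e, hγ₂ e, ae_restrict_mem measurableSet_Ioo] with x hx1 hx2 hx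
      have hWx : W e x = U₁ e x - U₂ e x := hUIcc e x ⟨hx.1.le, hx.2.le⟩
      rcases le_or_gt (W e x) 0 with hle | hpos
      · have htarget : max (v₁ e x - v₂ e x) 0 = 0 := by
          refine max_eq_right ?_
          rw [hx1, hx2]
          have hU : U₁ e x ≤ U₂ e x := by
            rw [hWx] at hle
            linarith
          exact sub_nonpos.2 ((hγ e).2.1.monotone hU)
        rw [htarget]
        refine Tendsto.congr (fun n => ?_) tendsto_const_nhds
        have hz : Φ (cs n) (ds n) e x = 0 := by
          rw [hΦ]
          dsimp only
          rw [max_eq_right (le_trans hle (hcs1 n).1.le),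
            min_eq_left (hcs1 n).2.le, sub_self, zero_div]
        rw [hz, mul_zero]
      · have htarget : max (v₁ e x - v₂ e x) 0 = v₁ e x - v₂ e x := by
          refine max_eq_left ?_
          rw [hx1, hx2]
          have hU : U₂ e x ≤ U₁ e x := by
            rw [hWx] at hpos
            linarith
          exact sub_nonneg.2 ((hγ e).2.1.monotone hU)
        rw [htarget]
        have hev : ∀ᶠ n in atTop, ds n < W e x := hdlim.eventually_lt_const hpos
        refine Tendsto.congr' ?_ tendsto_const_nhds
        filter_upwards [hev] with n hn
        have ho : Φ (cs n) (ds n) e x = 1 := by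
          rw [hΦ]
          dsimp only
          rw [max_eq_left (le_trans (hcs1 n).2.le hn.le), min_eq_right hn.le,
            div_self (by linarith [(hcs1 n).2] : ds n - cs n ≠ 0)]
        rw [ho, mul_one]
  have hfin := le_of_tendsto hlim (Eventually.of_forall hbound)
  simp only [edgeSum, vertexSum]
  exact hfin

end KeyLemma


/-- contraction/comparison principle for weak solutions of (P_ω^f) on a
metric graph; in particular uniqueness of weak solutions. -/
theorem graph_comparison_principle
    (G : MetricGraph) (p : G.E → ℝ) (hp : ∀ e, 1 < p e)
    (γ : G.E → ℝ → ℝ)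
    (hγ : ∀ e, Continuous (γ e) ∧ StrictMono (γ e) ∧ Function.Surjective (γ e) ∧ γ e 0 = 0)
    (f₁ f₂ : G.E → ℝ → ℝ)
    (hf₁ : ∀ e, IntegrableOn (f₁ e) (Ioo 0 (G.len e)) volume)
    (hf₂ : ∀ e, IntegrableOn (f₂ e) (Ioo 0 (G.len e)) volume)
    (ω₁ ω₂ : G.V → ℝ) (v₁ v₂ : G.E → ℝ → ℝ)
    (h₁ : IsGraphWeakSolution G p γ f₁ ω₁ v₁)
    (h₂ : IsGraphWeakSolution G p γ f₂ ω₂ v₂) :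
    edgeSum G (fun e => ∫ x in Ioo (0:ℝ) (G.len e), max (v₁ e x - v₂ e x) 0)
      ≤ edgeSum G (fun e => ∫ x in Ioo (0:ℝ) (G.len e), max (f₁ e x - f₂ e x) 0)
        + vertexSum G (fun w => max (ω₁ w - ω₂ w) 0) ∧
    (f₁ = f₂ → ω₁ = ω₂ →
      ∀ e, v₁ e =ᵐ[volume.restrict (Ioo 0 (G.len e))] v₂ e) := by
  constructor
  · exact graph_key G p hp γ hγ f₁ f₂ hf₁ hf₂ ω₁ ω₂ v₁ v₂ h₁ h₂
  · intro hf hω e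
    subst hf
    subst hω
    letI := G.fintypeE
    letI := G.fintypeV
    have hv₁ : ∀ e', IntegrableOn (v₁ e') (Ioo 0 (G.len e')) volume := by
      obtain ⟨u, u', uV, hS⟩ := h₁
      exact hS.1
    have hv₂ : ∀ e', IntegrableOn (v₂ e') (Ioo 0 (G.len e')) volume := by
      obtain ⟨u, u', uV, hS⟩ := h₂
      exact hS.1
    have k₁ := graph_key G p hp γ hγ f₁ f₁ hf₁ hf₁ ω₁ ω₁ v₁ v₂ h₁ h₂
    have k₂ := graph_key G p hp γ hγ f₁ f₁ hf₁ hf₁ ω₁ ω₁ v₂ v₁ h₂ h₁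
    have hzero : edgeSum G (fun e => ∫ x in Ioo (0:ℝ) (G.len e), max (f₁ e x - f₁ e x) 0)
        + vertexSum G (fun w => max (ω₁ w - ω₁ w) 0) = 0 := by
      simp [edgeSum, vertexSum]
    rw [hzero] at k₁ k₂
    simp only [edgeSum] at k₁ k₂
    have hterm : ∀ (w w' : G.E → ℝ → ℝ),
        ((∑ e', ∫ x in Ioo (0:ℝ) (G.len e'), max (w e' x - w' e' x) 0) ≤ 0) →
        ∀ e', (∫ x in Ioo (0:ℝ) (G.len e'), max (w e' x - w' e' x) 0) = 0 := by
      intro w w' hle e'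
      have hnn : ∀ e'' ∈ Finset.univ (α := G.E),
          (0:ℝ) ≤ ∫ x in Ioo (0:ℝ) (G.len e''), max (w e'' x - w' e'' x) 0 :=
        fun e'' _ => integral_nonneg fun x => le_max_right _ _
      have hsum0 : (∑ e', ∫ x in Ioo (0:ℝ) (G.len e'), max (w e' x - w' e' x) 0) = 0 :=
        le_antisymm hle (Finset.sum_nonneg hnn)
      exact (Finset.sum_eq_zero_iff_of_nonneg hnn).1 hsum0 e' (Finset.mem_univ e')
    have h1 : (fun x => max (v₁ e x - v₂ e x) 0)
        =ᵐ[volume.restrict (Ioo 0 (G.len e))] 0 := by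
      refine (integral_eq_zero_iff_of_nonneg_ae
        (Eventually.of_forall fun x => le_max_right _ _)
        ((hv₁ e).sub (hv₂ e)).pos_part).1 (hterm v₁ v₂ k₁ e)
    have h2 : (fun x => max (v₂ e x - v₁ e x) 0)
        =ᵐ[volume.restrict (Ioo 0 (G.len e))] 0 := by
      refine (integral_eq_zero_iff_of_nonneg_ae
        (Eventually.of_forall fun x => le_max_right _ _)
        ((hv₂ e).sub (hv₁ e)).pos_part).1 (hterm v₂ v₁ k₂ e)
    filter_upwards [h1, h2] with x hx1 hx2
    have ha : v₁ e x - v₂ e x ≤ 0 := by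
      have := le_max_left (v₁ e x - v₂ e x) 0
      simp only [Pi.zero_apply] at hx1
      linarith [hx1 ▸ this]
    have hb : v₂ e x - v₁ e x ≤ 0 := by
      have := le_max_left (v₂ e x - v₁ e x) 0
      simp only [Pi.zero_apply] at hx2
      linarith [hx2 ▸ this]
    linarith
end
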